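/- arXiv:math/0610075 — 7 statements merged into one kernel-verified Lean document; each statement's English description precedes it below -/
import Mathlib

section
/- Let L > 0 and let μ be a compactly supported probability measure on ℝ with Cauchy transform G. Suppose there exists an open set U ⊆ ℂ containing {z ∈ ℂ : Im z ≠ 0} ∪ {x ∈ ℝ : |x| > L} and a function F holomorphic on U such that F(z) = G(z) whenever Im z ≠ 0. Then the support of μ is contained in the interval [−L, L]. -/
open MeasureTheory

/-- The Cauchy transform of a finite measure on ℝ. -/
noncomputable def cauchyTransform (μ : Measure ℝ) (z : ℂ) : ℂ :=
  ∫ t : ℝ, (z - (t : ℂ))⁻¹ ∂μ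

section AuxCT

open Filter Topology Complex

lemma integrable_inv_ct (μ : Measure ℝ) [IsFiniteMeasure μ] (z : ℂ) (hz : z.im ≠ 0) :
    Integrable (fun t : ℝ => (z - (t : ℂ))⁻¹) μ := by
  have hne : ∀ t : ℝ, z - (t : ℂ) ≠ 0 := by
    intro t h
    apply hz
    have : (z - (t:ℂ)).im = 0 := by rw [h]; simp
    simpa using this
  have hcont : Continuous (fun t : ℝ => (z - (t : ℂ))⁻¹) := by
    apply Continuous.inv₀ (by continuity) hne
  refine (integrable_const (|z.im|⁻¹)).mono' hcont.aestronglyMeasurable ?_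
  refine Filter.Eventually.of_forall fun t => ?_
  rw [norm_inv]
  have h1 : |z.im| ≤ ‖z - (t:ℂ)‖ := by
    have := Complex.abs_im_le_norm (z - (t:ℂ))
    simpa using this
  have h2 : (0:ℝ) < |z.im| := abs_pos.mpr hz
  exact inv_anti₀ h2 h1

lemma ct_conj (μ : Measure ℝ) (z : ℂ) :
    cauchyTransform μ ((starRingEnd ℂ) z) = (starRingEnd ℂ) (cauchyTransform μ z) := by
  unfold cauchyTransform
  rw [← integral_conj]
  congr 1
  funext t
  rw [map_inv₀, map_sub, Complex.conj_ofReal]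

open Filter Topology in
lemma key_ball (L : ℝ) (μ : Measure ℝ) [IsProbabilityMeasure μ]
    (U : Set ℂ) (hUopen : IsOpen U)
    (hU1 : {z : ℂ | z.im ≠ 0} ⊆ U)
    (hU2 : (fun x : ℝ => (x : ℂ)) '' {x : ℝ | L < |x|} ⊆ U)
    (F : ℂ → ℂ) (hF : DifferentiableOn ℂ F U)
    (hFG : ∀ z : ℂ, z.im ≠ 0 → F z = cauchyTransform μ z)
    (x : ℝ) (hx : L < |x|) (δ : ℝ) (hδ : 0 ≤ δ) :
    (μ (Metric.closedBall x δ)).toReal ≤ δ ^ 2 * ‖deriv F (x : ℂ)‖ := by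
  have hxU : (x : ℂ) ∈ U := hU2 ⟨x, hx, rfl⟩
  have hmem : ∀ ε : ℝ, ε ≠ 0 → ((x : ℂ) + ε * Complex.I).im ≠ 0 := by
    intro ε hε; simpa using hε
  -- the vertical path
  have hpathc : Continuous (fun ε : ℝ => (x : ℂ) + ε * Complex.I) := by continuity
  have path : Tendsto (fun ε : ℝ => (x : ℂ) + ε * Complex.I) (𝓝[>] 0) (𝓝 (x : ℂ)) := by
    have := (hpathc.tendsto 0).mono_left (nhdsWithin_le_nhds (s := Set.Ioi (0:ℝ)))
    simpa using this
  have hFcont : ContinuousAt F (x : ℂ) :=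
    hF.continuousOn.continuousAt (hUopen.mem_nhds hxU)
  -- Im F x = 0
  have hImF : (F (x : ℂ)).im = 0 := by
    have limF : Tendsto (fun ε : ℝ => F ((x : ℂ) + ε * Complex.I)) (𝓝[>] 0) (𝓝 (F x)) :=
      hFcont.tendsto.comp path
    have path2 : Tendsto (fun ε : ℝ => (x : ℂ) - ε * Complex.I) (𝓝[>] 0) (𝓝 (x : ℂ)) := by
      have hc : Continuous (fun ε : ℝ => (x : ℂ) - ε * Complex.I) := by continuity
      have := (hc.tendsto 0).mono_left (nhdsWithin_le_nhds (s := Set.Ioi (0:ℝ)))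
      simpa using this
    have limF2 : Tendsto (fun ε : ℝ => F ((x : ℂ) - ε * Complex.I)) (𝓝[>] 0) (𝓝 (F x)) :=
      hFcont.tendsto.comp path2
    have heq : ∀ ε ∈ Set.Ioi (0:ℝ),
        F ((x : ℂ) - ε * Complex.I) = (starRingEnd ℂ) (F ((x : ℂ) + ε * Complex.I)) := by
      intro ε hε
      have hε' : ε ≠ 0 := ne_of_gt hε
      have h1 : ((x : ℂ) - ε * Complex.I).im ≠ 0 := by simpa using hε'
      have hconj : (starRingEnd ℂ) ((x : ℂ) + ε * Complex.I) = (x : ℂ) - ε * Complex.I := by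
        simp [Complex.ext_iff]
      rw [hFG _ h1, hFG _ (hmem ε hε'), ← hconj, ct_conj]
    have limF2' : Tendsto (fun ε : ℝ => F ((x : ℂ) - ε * Complex.I)) (𝓝[>] 0)
        (𝓝 ((starRingEnd ℂ) (F x))) := by
      refine Tendsto.congr' ?_ ((Complex.continuous_conj.tendsto _).comp limF)
      filter_upwards [self_mem_nhdsWithin] with ε hε using (heq ε hε).symm
    have : F (x : ℂ) = (starRingEnd ℂ) (F (x : ℂ)) := tendsto_nhds_unique limF2 limF2'
    have := Complex.conj_eq_iff_im.mp this.symm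
    exact this
  -- the slope limit
  have hd : HasDerivAt F (deriv F (x : ℂ)) (x : ℂ) :=
    (hF.differentiableAt (hUopen.mem_nhds hxU)).hasDerivAt
  have hslope := hasDerivAt_iff_tendsto_slope.mp hd
  have pathne : Tendsto (fun ε : ℝ => (x : ℂ) + ε * Complex.I) (𝓝[>] 0) (𝓝[≠] (x : ℂ)) := by
    apply tendsto_nhdsWithin_of_tendsto_nhds_of_eventually_within _ path
    filter_upwards [self_mem_nhdsWithin] with ε hε
    have : ((x:ℂ) + ε * Complex.I).im ≠ 0 := hmem ε (ne_of_gt hε)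
    intro h
    rw [Set.mem_singleton_iff] at h
    exact this (by rw [h]; simp)
  have limslope : Tendsto (fun ε : ℝ => ((ε : ℂ) * Complex.I)⁻¹ *
      (F ((x : ℂ) + ε * Complex.I) - F (x : ℂ))) (𝓝[>] 0) (𝓝 (deriv F (x : ℂ))) := by
    have := hslope.comp pathne
    refine this.congr fun ε => ?_
    simp [slope, Function.comp]
  -- imaginary part limit
  have limIm : Tendsto (fun ε : ℝ => (F ((x : ℂ) + ε * Complex.I)).im / ε) (𝓝[>] 0)
      (𝓝 ((deriv F (x : ℂ)).re)) := by
    have := (Complex.continuous_re.tendsto _).comp limslope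
    refine Tendsto.congr' ?_ this
    filter_upwards [self_mem_nhdsWithin] with ε hε
    have hε' : (ε : ℝ) ≠ 0 := ne_of_gt hε
    have h1 : ((ε : ℂ) * Complex.I)⁻¹ = (ε⁻¹ : ℝ) * (-Complex.I) := by
      rw [mul_inv, Complex.inv_I, Complex.ofReal_inv]
    simp only [Function.comp, h1]
    rw [mul_assoc, Complex.re_ofReal_mul]
    have : (-Complex.I * (F ((x : ℂ) + ε * Complex.I) - F (x : ℂ))).re
        = (F ((x : ℂ) + ε * Complex.I)).im := by
      simp [Complex.mul_re, hImF]
    rw [this, div_eq_inv_mul]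
  -- pointwise inequality for each positive ε
  have hineq : ∀ ε : ℝ, 0 < ε →
      ε / (δ ^ 2 + ε ^ 2) * (μ (Metric.closedBall x δ)).toReal
        ≤ -(F ((x : ℂ) + ε * Complex.I)).im := by
    intro ε hε
    have hε' : ε ≠ 0 := ne_of_gt hε
    set z : ℂ := (x : ℂ) + ε * Complex.I with hz
    have hzim : z.im ≠ 0 := hmem ε hε'
    have hint : Integrable (fun t : ℝ => (z - (t : ℂ))⁻¹) μ := integrable_inv_ct μ z hzim
    have hgdef : ∀ t : ℝ, -((z - (t : ℂ))⁻¹).im = ε / ((x - t) ^ 2 + ε ^ 2) := by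
      intro t
      have hre : (z - (t : ℂ)).re = x - t := by simp [hz]
      have him : (z - (t : ℂ)).im = ε := by simp [hz]
      rw [Complex.inv_im, Complex.normSq_apply, hre, him]
      rw [neg_div, neg_neg]
      ring
    have hgint : Integrable (fun t : ℝ => ε / ((x - t) ^ 2 + ε ^ 2)) μ := by
      have h1 : Integrable (fun t : ℝ => -((z - (t : ℂ))⁻¹).im) μ := hint.im.neg
      exact h1.congr (Filter.Eventually.of_forall fun t => hgdef t)
    have hGim : -(cauchyTransform μ z).im = ∫ t, ε / ((x - t) ^ 2 + ε ^ 2) ∂μ := by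
      unfold cauchyTransform
      have him2 : ∫ t : ℝ, ((z - (t : ℂ))⁻¹).im ∂μ = (∫ t : ℝ, (z - (t : ℂ))⁻¹ ∂μ).im :=
        integral_im hint
      rw [← him2, ← integral_neg]
      exact integral_congr_ae (Filter.Eventually.of_forall hgdef)
    have hbound : ε / (δ ^ 2 + ε ^ 2) * (μ (Metric.closedBall x δ)).toReal
        ≤ ∫ t in Metric.closedBall x δ, ε / ((x - t) ^ 2 + ε ^ 2) ∂μ := by
      refine setIntegral_ge_of_const_le_real measurableSet_closedBall
        (measure_ne_top μ _) (fun t ht => ?_) hgint.integrableOn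
      have hdist : |t - x| ≤ δ := by
        rw [Metric.mem_closedBall, Real.dist_eq] at ht
        exact ht
      have hsq : (x - t) ^ 2 ≤ δ ^ 2 := by
        rw [abs_le] at hdist
        apply sq_le_sq'
        · linarith [hdist.2]
        · linarith [hdist.1]
      gcongr
    have hle2 : ∫ t in Metric.closedBall x δ, ε / ((x - t) ^ 2 + ε ^ 2) ∂μ
        ≤ ∫ t, ε / ((x - t) ^ 2 + ε ^ 2) ∂μ :=
      setIntegral_le_integral hgint (Filter.Eventually.of_forall fun t => by positivity)
    calc ε / (δ ^ 2 + ε ^ 2) * (μ (Metric.closedBall x δ)).toReal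
        ≤ ∫ t in Metric.closedBall x δ, ε / ((x - t) ^ 2 + ε ^ 2) ∂μ := hbound
      _ ≤ ∫ t, ε / ((x - t) ^ 2 + ε ^ 2) ∂μ := hle2
      _ = -(cauchyTransform μ z).im := hGim.symm
      _ = -(F z).im := by rw [hFG z hzim]
  -- pass to the limit
  set m : ℝ := (μ (Metric.closedBall x δ)).toReal with hm
  have hlim : Filter.Tendsto
      (fun ε : ℝ => (δ ^ 2 + ε ^ 2) * (-(F ((x : ℂ) + ε * Complex.I)).im / ε)) (𝓝[>] 0)
      (𝓝 ((δ ^ 2 + 0 ^ 2) * (-(deriv F (x : ℂ)).re))) := by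
    apply Filter.Tendsto.mul
    · have hc : Continuous (fun ε : ℝ => δ ^ 2 + ε ^ 2) := by continuity
      exact (hc.tendsto 0).mono_left nhdsWithin_le_nhds
    · have := limIm.neg
      refine this.congr fun ε => ?_
      rw [neg_div]
  have hev : ∀ᶠ ε : ℝ in 𝓝[>] (0:ℝ),
      m ≤ (δ ^ 2 + ε ^ 2) * (-(F ((x : ℂ) + ε * Complex.I)).im / ε) := by
    filter_upwards [self_mem_nhdsWithin] with ε hε
    have hε : (0:ℝ) < ε := hε
    have hc : 0 < ε / (δ ^ 2 + ε ^ 2) := by positivity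
    have h1 := hineq ε hε
    have h2 : m ≤ (-(F ((x : ℂ) + ε * Complex.I)).im) / (ε / (δ ^ 2 + ε ^ 2)) := by
      rw [le_div_iff₀ hc]
      linarith [mul_comm m (ε / (δ ^ 2 + ε ^ 2))]
    calc m ≤ (-(F ((x : ℂ) + ε * Complex.I)).im) / (ε / (δ ^ 2 + ε ^ 2)) := h2
      _ = (δ ^ 2 + ε ^ 2) * (-(F ((x : ℂ) + ε * Complex.I)).im / ε) := by
          rw [div_div_eq_mul_div]; ring
  have hfinal : m ≤ (δ ^ 2 + 0 ^ 2) * (-(deriv F (x : ℂ)).re) := ge_of_tendsto hlim hev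
  have : -(deriv F (x : ℂ)).re ≤ ‖deriv F (x : ℂ)‖ := by
    have h1 : -(deriv F (x : ℂ)).re ≤ |(deriv F (x : ℂ)).re| := neg_le_abs _
    have h2 : |(deriv F (x : ℂ)).re| ≤ ‖deriv F (x : ℂ)‖ :=
      Complex.abs_re_le_norm _
    linarith
  nlinarith [norm_nonneg (deriv F (x : ℂ)), sq_nonneg δ]

lemma cover_aux (a δ : ℝ) (hδ : 0 ≤ δ) : ∀ n : ℕ,
    Set.Icc a (a + (n + 1) * δ) ⊆
      ⋃ i ∈ Finset.range (n + 1), Set.Icc (a + i * δ) (a + i * δ + δ) := by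
  intro n
  induction n with
  | zero =>
    intro y hy
    simp only [Set.mem_iUnion, Finset.mem_range]
    refine ⟨0, by norm_num, ?_⟩
    push_cast
    constructor
    · linarith [hy.1]
    · have := hy.2; push_cast at this; linarith
  | succ n ih =>
    intro y hy
    have hy' : y ∈ Set.Icc a (a + (n + 1) * δ) ∪
        Set.Icc (a + (n + 1) * δ) (a + ((n : ℝ) + 1 + 1) * δ) := by
      apply Set.Icc_subset_Icc_union_Icc
      have := hy.1; have := hy.2
      constructor
      · exact hy.1
      · have h2 := hy.2; push_cast at h2 ⊢; linarith
    rcases hy' with hy1 | hy2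
    · have := ih hy1
      simp only [Set.mem_iUnion, Finset.mem_range] at this ⊢
      obtain ⟨i, hi, hmem⟩ := this
      exact ⟨i, by omega, hmem⟩
    · simp only [Set.mem_iUnion, Finset.mem_range]
      refine ⟨n + 1, by omega, ?_⟩
      push_cast at hy2 ⊢
      constructor
      · linarith [hy2.1]
      · linarith [hy2.2]

open Filter Topology in
lemma key_Icc (L : ℝ) (μ : Measure ℝ) [IsProbabilityMeasure μ]
    (U : Set ℂ) (hUopen : IsOpen U)
    (hU1 : {z : ℂ | z.im ≠ 0} ⊆ U)
    (hU2 : (fun x : ℝ => (x : ℂ)) '' {x : ℝ | L < |x|} ⊆ U)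
    (F : ℂ → ℂ) (hF : DifferentiableOn ℂ F U)
    (hFG : ∀ z : ℂ, z.im ≠ 0 → F z = cauchyTransform μ z)
    (a b : ℝ) (h : ∀ x ∈ Set.Icc a b, L < |x|) : μ (Set.Icc a b) = 0 := by
  rcases lt_or_ge b a with hab | hab
  · rw [Set.Icc_eq_empty (not_le.mpr hab)]; exact measure_empty
  have hmaps : Set.MapsTo (fun x : ℝ => (x : ℂ)) (Set.Icc a b) U :=
    fun x hx => hU2 ⟨x, h x hx, rfl⟩
  have hderivCont : ContinuousOn (deriv F) U :=
    ((hF.analyticOnNhd hUopen).deriv).continuousOn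
  have hcont : ContinuousOn (fun x : ℝ => deriv F (x : ℂ)) (Set.Icc a b) :=
    hderivCont.comp Complex.continuous_ofReal.continuousOn hmaps
  obtain ⟨C, hC⟩ := isCompact_Icc.exists_bound_of_continuousOn hcont
  set C' : ℝ := max C 0 with hC'def
  have hC' : ∀ x ∈ Set.Icc a b, ‖deriv F (x : ℂ)‖ ≤ C' :=
    fun x hx => (hC x hx).trans (le_max_left _ _)
  have hC'0 : (0 : ℝ) ≤ C' := le_max_right _ _
  have key : ∀ n : ℕ, (μ (Set.Icc a b)).toReal ≤ C' * (b - a) ^ 2 / (4 * (n + 1)) := by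
    intro n
    set δ : ℝ := (b - a) / (n + 1) with hδdef
    have hn1 : (0 : ℝ) < (n : ℝ) + 1 := by positivity
    have hδ0 : 0 ≤ δ := div_nonneg (by linarith) (by linarith)
    have hballs : ∀ i : ℕ, Set.Icc (a + i * δ) (a + i * δ + δ)
        = Metric.closedBall (a + i * δ + δ / 2) (δ / 2) := by
      intro i
      rw [Real.closedBall_eq_Icc]
      congr 1 <;> ring
    have hb : a + (n + 1) * δ = b := by
      rw [hδdef]; field_simp; ring
    have hcover : Set.Icc a b ⊆
        ⋃ i ∈ Finset.range (n + 1), Metric.closedBall (a + i * δ + δ / 2) (δ / 2) := by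
      intro y hy
      have := cover_aux a δ hδ0 n (by rw [hb]; exact hy)
      simp only [Set.mem_iUnion, Finset.mem_range] at this ⊢
      obtain ⟨i, hi, hmem⟩ := this
      exact ⟨i, hi, by rw [← hballs i]; exact hmem⟩
    have hmid : ∀ i ∈ Finset.range (n + 1), (a + i * δ + δ / 2) ∈ Set.Icc a b := by
      intro i hi
      rw [Finset.mem_range] at hi
      have hi' : (i : ℝ) ≤ n := by exact_mod_cast Nat.lt_succ_iff.mp hi
      constructor
      · nlinarith
      · rw [← hb]; nlinarith
    have h2 : ∀ i ∈ Finset.range (n + 1),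
        μ (Metric.closedBall (a + i * δ + δ / 2) (δ / 2))
          ≤ ENNReal.ofReal ((δ / 2) ^ 2 * C') := by
      intro i hi
      have hmem := hmid i hi
      have hball := key_ball L μ U hUopen hU1 hU2 F hF hFG
        (a + i * δ + δ / 2) (h _ hmem) (δ / 2) (by linarith)
      have hb2 : (μ (Metric.closedBall (a + i * δ + δ / 2) (δ / 2))).toReal
          ≤ (δ / 2) ^ 2 * C' := by
        refine hball.trans ?_
        have := hC' _ hmem
        nlinarith [sq_nonneg (δ / 2)]
      calc μ (Metric.closedBall (a + i * δ + δ / 2) (δ / 2))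
          = ENNReal.ofReal ((μ (Metric.closedBall (a + i * δ + δ / 2) (δ / 2))).toReal) :=
            (ENNReal.ofReal_toReal (measure_ne_top μ _)).symm
        _ ≤ ENNReal.ofReal ((δ / 2) ^ 2 * C') := ENNReal.ofReal_le_ofReal hb2
    have h3 : μ (Set.Icc a b) ≤ ENNReal.ofReal ((n + 1) * ((δ / 2) ^ 2 * C')) := by
      calc μ (Set.Icc a b)
          ≤ ∑ i ∈ Finset.range (n + 1), μ (Metric.closedBall (a + i * δ + δ / 2) (δ / 2)) :=
            (measure_mono hcover).trans (measure_biUnion_finset_le _ _)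
        _ ≤ ∑ _i ∈ Finset.range (n + 1), ENNReal.ofReal ((δ / 2) ^ 2 * C') :=
            Finset.sum_le_sum h2
        _ = (n + 1 : ℕ) * ENNReal.ofReal ((δ / 2) ^ 2 * C') := by
            rw [Finset.sum_const, Finset.card_range, nsmul_eq_mul]
        _ = ENNReal.ofReal ((n + 1 : ℕ)) * ENNReal.ofReal ((δ / 2) ^ 2 * C') := by
            rw [ENNReal.ofReal_natCast]
        _ = ENNReal.ofReal ((n + 1 : ℕ) * ((δ / 2) ^ 2 * C')) := by
            rw [← ENNReal.ofReal_mul (by positivity)]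
        _ = ENNReal.ofReal ((n + 1) * ((δ / 2) ^ 2 * C')) := by push_cast; ring_nf
    have h4 : (μ (Set.Icc a b)).toReal ≤ (n + 1) * ((δ / 2) ^ 2 * C') := by
      have := ENNReal.toReal_mono ENNReal.ofReal_ne_top h3
      rwa [ENNReal.toReal_ofReal (by positivity)] at this
    refine h4.trans (le_of_eq ?_)
    rw [hδdef]
    field_simp
    ring
  have hlim : Tendsto (fun n : ℕ => C' * (b - a) ^ 2 / (4 * (n + 1))) atTop (𝓝 0) := by
    have h1 : Tendsto (fun n : ℕ => (1 : ℝ) / (n + 1)) atTop (𝓝 0) :=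
      tendsto_one_div_add_atTop_nhds_zero_nat
    have h2 := h1.const_mul (C' * (b - a) ^ 2 / 4)
    simp only [mul_zero] at h2
    refine h2.congr fun n => ?_
    field_simp
  have hle : (μ (Set.Icc a b)).toReal ≤ 0 :=
    ge_of_tendsto hlim (Filter.Eventually.of_forall key)
  have h0 : (μ (Set.Icc a b)).toReal = 0 := le_antisymm hle ENNReal.toReal_nonneg
  have := ENNReal.ofReal_toReal (measure_ne_top μ (Set.Icc a b))
  rw [h0] at this
  simpa using this.symm


end AuxCT

/-- If the Cauchy transform of a compactly supported probability measure extends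
holomorphically across the part of the real line with `|x| > L`, then the measure is
supported in `[-L, L]`. -/
theorem stmt_0 (L : ℝ) (hL : 0 < L) (μ : Measure ℝ) [IsProbabilityMeasure μ]
    (hcs : ∃ M : ℝ, 0 < M ∧ μ (Set.Icc (-M) M)ᶜ = 0)
    (U : Set ℂ) (hUopen : IsOpen U)
    (hU1 : {z : ℂ | z.im ≠ 0} ⊆ U)
    (hU2 : (fun x : ℝ => (x : ℂ)) '' {x : ℝ | L < |x|} ⊆ U)
    (F : ℂ → ℂ) (hF : DifferentiableOn ℂ F U)
    (hFG : ∀ z : ℂ, z.im ≠ 0 → F z = cauchyTransform μ z) :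
    μ (Set.Icc (-L) L)ᶜ = 0 := by
  obtain ⟨M, hM0, hMμ⟩ := hcs
  have hIoi : μ (Set.Ioi L) = 0 := by
    have hsub : Set.Ioi L ⊆ (⋃ n : ℕ, Set.Icc (L + 1 / (n + 1)) M) ∪ (Set.Icc (-M) M)ᶜ := by
      intro t ht
      rw [Set.mem_Ioi] at ht
      rcases le_or_gt t M with h1 | h1
      · left
        obtain ⟨n, hn⟩ := exists_nat_one_div_lt (sub_pos.mpr ht)
        exact Set.mem_iUnion.mpr ⟨n, ⟨by linarith, h1⟩⟩
      · right
        intro hmem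
        exact absurd hmem.2 (not_le.mpr h1)
    refine measure_mono_null hsub (measure_union_null (measure_iUnion_null fun n => ?_) hMμ)
    refine key_Icc L μ U hUopen hU1 hU2 F hF hFG _ _ (fun x hx => ?_)
    have h3 : (0 : ℝ) < 1 / ((n : ℝ) + 1) := by positivity
    have h4 : L < x := by have := hx.1; linarith
    exact h4.trans_le (le_abs_self x)
  have hIio : μ (Set.Iio (-L)) = 0 := by
    have hsub : Set.Iio (-L) ⊆ (⋃ n : ℕ, Set.Icc (-M) (-L - 1 / (n + 1))) ∪ (Set.Icc (-M) M)ᶜ := by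
      intro t ht
      rw [Set.mem_Iio] at ht
      rcases le_or_gt (-M) t with h1 | h1
      · left
        obtain ⟨n, hn⟩ := exists_nat_one_div_lt (sub_pos.mpr (by linarith : t < -L))
        refine Set.mem_iUnion.mpr ⟨n, ⟨h1, by linarith⟩⟩
      · right
        intro hmem
        exact absurd hmem.1 (not_le.mpr h1)
    refine measure_mono_null hsub (measure_union_null (measure_iUnion_null fun n => ?_) hMμ)
    refine key_Icc L μ U hUopen hU1 hU2 F hF hFG _ _ (fun x hx => ?_)
    have h3 : (0 : ℝ) < 1 / ((n : ℝ) + 1) := by positivity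
    have h4 : x < -L := by have := hx.2; linarith
    have h5 : L < -x := by linarith
    exact h5.trans_le (neg_le_abs x)
  have hsub2 : (Set.Icc (-L) L)ᶜ ⊆ Set.Iio (-L) ∪ Set.Ioi L := by
    intro t ht
    simp only [Set.mem_compl_iff, Set.mem_Icc, not_and_or, not_le] at ht
    rcases ht with h | h
    · exact Or.inl h
    · exact Or.inr h
  exact measure_mono_null hsub2 (measure_union_null hIio hIoi)
end

section
/- Let L > 0 and let μ be a probability measure on ℝ supported in [−L, L] with ∫ t dμ(t) = 0. Then for every real r with r > L and every z ∈ ℂ with |z| = r, the Cauchy transform satisfies |G(z)| ≥ 1/r − (L²/r²)·1/(r−L). -/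
open MeasureTheory

/-- Lower bound for the Cauchy transform of a centered probability measure supported in
`[-L, L]`, on circles `|z| = r` with `r > L`. -/
theorem stmt_4 (L : ℝ) (hL : 0 < L) (μ : Measure ℝ) [IsProbabilityMeasure μ]
    (hsupp : μ (Set.Icc (-L) L)ᶜ = 0) (hmean : ∫ t : ℝ, t ∂μ = 0) :
    ∀ r : ℝ, L < r → ∀ z : ℂ, ‖z‖ = r →
      1 / r - (L ^ 2 / r ^ 2) * (1 / (r - L)) ≤ ‖cauchyTransform μ z‖ := by
  intro r hr z hz
  have hr0 : 0 < r := hL.trans hr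
  have hrL : 0 < r - L := by linarith
  have hz0 : z ≠ 0 := by
    intro h
    rw [h, norm_zero] at hz
    linarith
  have hae : ∀ᵐ t ∂μ, t ∈ Set.Icc (-L) L := by
    rw [ae_iff]
    exact hsupp
  have hsub : ∀ t : ℝ, t ∈ Set.Icc (-L) L → r - L ≤ ‖z - t‖ := by
    intro t ht
    have h1 : |t| ≤ L := abs_le.2 ⟨ht.1, ht.2⟩
    have h2 : ‖z‖ - ‖(t : ℂ)‖ ≤ ‖z - (t : ℂ)‖ := norm_sub_norm_le _ _
    rw [Complex.norm_real, Real.norm_eq_abs, hz] at h2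
    linarith
  have hne : ∀ t : ℝ, t ∈ Set.Icc (-L) L → z - (t : ℂ) ≠ 0 := by
    intro t ht h
    have := hsub t ht
    rw [h, norm_zero] at this
    linarith
  -- integrability
  have hfm : AEStronglyMeasurable (fun t : ℝ => (z - (t : ℂ))⁻¹) μ :=
    ((measurable_const.sub Complex.measurable_ofReal).inv).aestronglyMeasurable
  have hfi : Integrable (fun t : ℝ => (z - (t : ℂ))⁻¹) μ := by
    apply (integrable_const ((r - L)⁻¹)).mono' hfm
    filter_upwards [hae] with t ht
    rw [norm_inv]
    exact inv_anti₀ hrL (hsub t ht)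
  have hti : Integrable (fun t : ℝ => (t : ℂ)) μ := by
    apply (integrable_const L).mono' Complex.measurable_ofReal.aestronglyMeasurable
    filter_upwards [hae] with t ht
    rw [Complex.norm_real, Real.norm_eq_abs]
    exact abs_le.2 ⟨ht.1, ht.2⟩
  have htint : ∫ t : ℝ, (t : ℂ) ∂μ = 0 := by
    have := integral_ofReal (𝕜 := ℂ) (f := fun t : ℝ => t) (μ := μ)
    rw [hmean] at this
    simpa using this
  have e1 : ∫ t : ℝ, ((z - (t : ℂ))⁻¹ - z⁻¹ - (t : ℂ) / z ^ 2) ∂μ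
      = (∫ t : ℝ, ((z - (t : ℂ))⁻¹ - z⁻¹) ∂μ) - ∫ t : ℝ, (t : ℂ) / z ^ 2 ∂μ :=
    integral_sub (by exact hfi.sub (integrable_const _)) (by exact hti.div_const _)
  have e2 : ∫ t : ℝ, ((z - (t : ℂ))⁻¹ - z⁻¹) ∂μ
      = (∫ t : ℝ, (z - (t : ℂ))⁻¹ ∂μ) - ∫ t : ℝ, (z⁻¹ : ℂ) ∂μ :=
    integral_sub hfi (integrable_const _)
  have hint : ∫ t : ℝ, ((z - (t : ℂ))⁻¹ - z⁻¹ - (t : ℂ) / z ^ 2) ∂μ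
      = cauchyTransform μ z - z⁻¹ := by
    rw [e1, e2, integral_const, integral_div, htint]
    simp [cauchyTransform]
  have hbound : ‖cauchyTransform μ z - z⁻¹‖ ≤ L ^ 2 / r ^ 2 * (1 / (r - L)) := by
    rw [← hint]
    have key := norm_integral_le_of_norm_le_const (μ := μ)
      (C := L ^ 2 / r ^ 2 * (1 / (r - L)))
      (f := fun t : ℝ => (z - (t : ℂ))⁻¹ - z⁻¹ - (t : ℂ) / z ^ 2) ?_
    · simpa using key
    · filter_upwards [hae] with t ht
      have hzt := hne t ht
      have h2 := hsub t ht
      have h3 : 0 < ‖z - (t : ℂ)‖ := lt_of_lt_of_le hrL h2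
      have hgeq : (z - (t : ℂ))⁻¹ - z⁻¹ - (t : ℂ) / z ^ 2
          = (t : ℂ) ^ 2 / (z ^ 2 * (z - (t : ℂ))) := by
        field_simp
        ring
      rw [hgeq, norm_div, norm_mul, norm_pow, norm_pow,
        Complex.norm_real, Real.norm_eq_abs, hz]
      have h1 : |t| ≤ L := abs_le.2 ⟨ht.1, ht.2⟩
      rw [div_le_iff₀ (mul_pos (by positivity) h3)]
      have hLe : |t| ^ 2 ≤ L ^ 2 := pow_le_pow_left₀ (abs_nonneg t) h1 2
      calc |t| ^ 2 ≤ L ^ 2 := hLe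
        _ = L ^ 2 / r ^ 2 * (1 / (r - L)) * (r ^ 2 * (r - L)) := by field_simp
        _ ≤ L ^ 2 / r ^ 2 * (1 / (r - L)) * (r ^ 2 * ‖z - ↑t‖) := by gcongr
  have habs : ‖z⁻¹‖ = 1 / r := by
    rw [norm_inv, hz, one_div]
  have htri : ‖z⁻¹‖ - ‖cauchyTransform μ z - z⁻¹‖ ≤
      ‖cauchyTransform μ z‖ := by
    have h := norm_sub_norm_le z⁻¹ (z⁻¹ - cauchyTransform μ z)
    rw [sub_sub_cancel, norm_sub_rev] at h
    simpa using h
  rw [habs] at htri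
  linarith
end

section
/- Let L > 0 and let μ be a probability measure on ℝ supported in [−L, L] with ∫ t dμ(t) = 0. Define g(z) = ∫_ℝ z/(1 − tz) dμ(t) for |z| < 1/L. Then z = 0 is the unique zero of g in the disc {z : |z| < 1/(2L)}. -/
open MeasureTheory

/-- `g(z) = ∫ z/(1 - t z) dμ(t)`, so that `g(z) = G(1/z)` where `G` is the
Cauchy transform of `μ`. -/
noncomputable def gTransform (μ : Measure ℝ) (z : ℂ) : ℂ :=
  ∫ t : ℝ, z / (1 - (t : ℂ) * z) ∂μ

/-- For a centered probability measure supported in `[-L, L]`, `z = 0` is the unique zero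
of `g(z) = G(1/z)` in the disc `|z| < 1/(2L)`. -/
theorem stmt_7 (L : ℝ) (hL : 0 < L) (μ : Measure ℝ) [IsProbabilityMeasure μ]
    (hsupp : μ (Set.Icc (-L) L)ᶜ = 0) (hmean : ∫ t : ℝ, t ∂μ = 0) :
    ∀ z : ℂ, ‖z‖ < 1 / (2 * L) → (gTransform μ z = 0 ↔ z = 0) := by
  intro z hz
  constructor
  · intro hg
    by_contra hz0
    have hznorm : (0:ℝ) < ‖z‖ := norm_pos_iff.2 hz0
    have hzL : 2 * L * ‖z‖ < 1 := by
      rw [lt_div_iff₀ (by positivity)] at hz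
      have : ‖z‖ = ‖z‖ := rfl
      nlinarith [hz]
    have hae : ∀ᵐ t ∂μ, t ∈ Set.Icc (-L) L := mem_ae_iff.mpr hsupp
    set f : ℝ → ℂ := fun t => z / (1 - (t:ℂ) * z) with hf
    have hden : ∀ t ∈ Set.Icc (-L) L, (1/2 : ℝ) ≤ ‖1 - (t:ℂ)*z‖ := by
      intro t ht
      have h1 : ‖(t:ℂ)*z‖ ≤ 1/2 := by
        rw [norm_mul, Complex.norm_real, Real.norm_eq_abs]
        have hta : |t| ≤ L := abs_le.2 ⟨ht.1, ht.2⟩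
        nlinarith [norm_nonneg z, mul_le_mul_of_nonneg_right hta (norm_nonneg z)]
      have := norm_sub_norm_le (1 : ℂ) ((t:ℂ)*z)
      simp only [norm_one] at this
      linarith
    have hbound : ∀ t ∈ Set.Icc (-L) L, ‖f t - z‖ ≤ 2 * L * ‖z‖^2 := by
      intro t ht
      have hd := hden t ht
      have hdne : (1 - (t:ℂ)*z) ≠ 0 := by
        intro h; rw [h] at hd; simp at hd; linarith
      have : f t - z = z * ((t:ℂ)*z) / (1 - (t:ℂ)*z) := by
        simp only [hf]
        rw [eq_div_iff hdne, sub_mul, div_mul_cancel₀ _ hdne]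
        ring
      rw [this]
      rw [norm_div, norm_mul, norm_mul, Complex.norm_real, Real.norm_eq_abs]
      rw [div_le_iff₀ (by linarith)]
      have hta : |t| ≤ L := abs_le.2 ⟨ht.1, ht.2⟩
      nlinarith [norm_nonneg z, abs_nonneg t,
        mul_le_mul_of_nonneg_left hd (by positivity : (0:ℝ) ≤ 2*L*‖z‖^2),
        mul_le_mul_of_nonneg_left (mul_le_mul_of_nonneg_right hta (norm_nonneg z)) (norm_nonneg z)]
    have hmeas : AEStronglyMeasurable f μ := by
      apply Measurable.aestronglyMeasurable
      exact measurable_const.div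
        (measurable_const.sub (Complex.measurable_ofReal.mul_const z))
    have hint : Integrable f μ := by
      refine ⟨hmeas, HasFiniteIntegral.of_bounded (C := 2 * ‖z‖) ?_⟩
      filter_upwards [hae] with t ht
      have hd := hden t ht
      have hdne : (1 - (t:ℂ)*z) ≠ 0 := by
        intro h; rw [h] at hd; simp at hd; linarith
      rw [hf]
      simp only [norm_div]
      rw [div_le_iff₀ (by linarith)]
      nlinarith [norm_nonneg z]
    have hsub : ∫ t, (f t - z) ∂μ = gTransform μ z - z := by
      rw [integral_sub hint (integrable_const z), integral_const]
      simp [gTransform, hf]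
    have hnorm : ‖∫ t, (f t - z) ∂μ‖ ≤ 2 * L * ‖z‖^2 := by
      have := norm_integral_le_of_norm_le_const (μ := μ)
        (f := fun t => f t - z) (C := 2 * L * ‖z‖^2) ?_
      · simpa using this
      · filter_upwards [hae] with t ht using hbound t ht
    rw [hsub, hg, zero_sub, norm_neg] at hnorm
    nlinarith [hznorm]
  · rintro rfl
    simp [gTransform]
end

section
/- Let m > 0, v > 0, D ≥ 0 and let K be holomorphic on the punctured disc A = {z ∈ ℂ : 0 < |z| < m}. Assume that |K′(z) + 1/z² − v| ≤ 2D·|z| for all z ∈ A, that m > 4/√v, and set r = 4D/v². Then K′(z) ≠ 0 for every z with 0 < |z| < v^{−1/2} − r. -/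
open Metric

/-- If `K` is holomorphic on the punctured disc of radius `m`, with
`|K′(z) + 1/z² − v| ≤ 2D|z|` there, `m > 4/√v`, and `r = 4D/v²`, then `K′` has no zeros in
the punctured disc of radius `v^{-1/2} − r`. -/
theorem stmt_12 (m v D : ℝ) (hm : 0 < m) (hv : 0 < v) (hD : 0 ≤ D)
    (A : Set ℂ) (hA : A = ball (0 : ℂ) m \ {0})
    (K : ℂ → ℂ) (hK : DifferentiableOn ℂ K A)
    (hK' : ∀ z ∈ A, ‖deriv K z + (z ^ 2)⁻¹ - (v : ℂ)‖ ≤ 2 * D * ‖z‖)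
    (hmv : 4 / Real.sqrt v < m)
    (r : ℝ) (hr : r = 4 * D / v ^ 2) :
    ∀ z : ℂ, 0 < ‖z‖ → ‖z‖ < (Real.sqrt v)⁻¹ - r →
      deriv K z ≠ 0 := by
  intro z hz0 hz1 hder
  have ht0 : 0 < Real.sqrt v := Real.sqrt_pos.mpr hv
  set t := Real.sqrt v with htdef
  have ht2 : t ^ 2 = v := Real.sq_sqrt hv.le
  set s := ‖z‖ with hs
  have hrnn : 0 ≤ r := by rw [hr]; positivity
  have hsm : s < m := by
    calc s < t⁻¹ - r := hz1
    _ ≤ t⁻¹ := by linarith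
    _ ≤ 4 / t := by rw [inv_eq_one_div]; gcongr; norm_num
    _ < m := hmv
  have hzA : z ∈ A := by
    rw [hA]
    refine ⟨?_, ?_⟩
    · simpa [mem_ball, Complex.dist_eq] using hsm
    · simp only [Set.mem_singleton_iff]
      intro h
      rw [hs, h, norm_zero] at hz0; exact lt_irrefl _ hz0
  have h := hK' z hzA
  rw [hder, zero_add] at h
  have hlb : s⁻¹ ^ 2 - v ≤ ‖(z ^ 2)⁻¹ - (v : ℂ)‖ := by
    have h1 : ‖(z ^ 2)⁻¹‖ = s⁻¹ ^ 2 := by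
      rw [norm_inv, norm_pow, ← hs, inv_pow]
    have h2 : ‖(v : ℂ)‖ = v := by
      rw [Complex.norm_real, Real.norm_eq_abs, abs_of_pos hv]
    calc s⁻¹ ^ 2 - v = ‖(z ^ 2)⁻¹‖ - ‖(v : ℂ)‖ := by rw [h1, h2]
    _ ≤ ‖(z ^ 2)⁻¹ - (v : ℂ)‖ := by
        have h3 := norm_sub_norm_le ((z ^ 2)⁻¹) ((v : ℂ))
        exact h3
    _ ≤ _ := le_refl _
  have hkey : s⁻¹ ^ 2 - v ≤ 2 * D * s := le_trans hlb h
  -- arithmetic contradiction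
  rw [hr] at hz1
  have hinv : s⁻¹ ^ 2 = 1 / s ^ 2 := by rw [inv_pow, inv_eq_one_div]
  rw [hinv, ← ht2] at hkey
  have hst : s * t < 1 := by
    have : s < t⁻¹ := by
      have : 4 * D / v ^ 2 ≥ 0 := by positivity
      linarith
    calc s * t < t⁻¹ * t := by gcongr
    _ = 1 := inv_mul_cancel₀ ht0.ne'
  have hz1' : s * t ^ 4 < t ^ 3 - 4 * D := by
    have h4 : v ^ 2 = t ^ 4 := by rw [← ht2]; ring
    rw [h4] at hz1
    have := mul_lt_mul_of_pos_right hz1 (by positivity : (0:ℝ) < t ^ 4)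
    have he : (t⁻¹ - 4 * D / t ^ 4) * t ^ 4 = t ^ 3 - 4 * D := by
      field_simp
    linarith [he ▸ this]
  have hmul : 1 ≤ t ^ 2 * s ^ 2 + 2 * D * s ^ 3 := by
    have := mul_le_mul_of_nonneg_right hkey (by positivity : (0:ℝ) ≤ s ^ 2)
    have he : (1 / s ^ 2 - t ^ 2) * s ^ 2 = 1 - t ^ 2 * s ^ 2 := by
      field_simp
    nlinarith [this]
  nlinarith [mul_pos hz0 ht0, sq_nonneg (s * t - 1), sq_nonneg (s * t),
    mul_le_mul_of_nonneg_left hz1'.le (by positivity : (0:ℝ) ≤ s ^ 3),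
    mul_nonneg (mul_nonneg hD hz0.le) (mul_nonneg hz0.le hz0.le)]
end

section
/- Let v > 0, D ≥ 0 with 4D/v^{3/2} ≤ 1/2, set r = 4D/v² and x = v^{−1/2} − r (so x > 0). Let K be a function defined at x satisfying |K(x) − 1/x − v·x| ≤ D·x². Then K(x) viewed as a real number satisfies Re K(x) ≤ 2√v + 5D/v; in particular, if K(x) is real then K(x) ≤ 2√v + 5D/v. -/
/-- With `v > 0`, `D ≥ 0`, `4D/v^{3/2} ≤ 1/2`, `r = 4D/v²` and `x = v^{-1/2} − r` (so
`x > 0`), any complex value `K(x)` with `|K(x) − 1/x − v x| ≤ D x²` has real part at most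
`2√v + 5D/v`; in particular, if `K(x)` is real then `K(x) ≤ 2√v + 5D/v`. -/
theorem stmt_13 (v D : ℝ) (hv : 0 < v) (hD : 0 ≤ D)
    (hsmall : 4 * D / (v * Real.sqrt v) ≤ 1 / 2)
    (r : ℝ) (hr : r = 4 * D / v ^ 2)
    (x : ℝ) (hx : x = (Real.sqrt v)⁻¹ - r)
    (Kx : ℂ) (hKx : ‖Kx - ((x : ℂ))⁻¹ - (v : ℂ) * (x : ℂ)‖ ≤ D * x ^ 2) :
    0 < x ∧ Kx.re ≤ 2 * Real.sqrt v + 5 * D / v ∧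
      (∀ y : ℝ, Kx = (y : ℂ) → y ≤ 2 * Real.sqrt v + 5 * D / v) := by
  set s := Real.sqrt v with hs_def
  have hs : 0 < s := Real.sqrt_pos.mpr hv
  have hs2 : s ^ 2 = v := Real.sq_sqrt hv.le
  have hD8 : 8 * D ≤ v * s := by
    rw [div_le_iff₀ (by positivity)] at hsmall; nlinarith
  have h8s : 8 * D * s ≤ v ^ 2 := by nlinarith
  have hrle : r ≤ 1 / (2 * s) := by
    rw [hr, div_le_div_iff₀ (by positivity) (by positivity)]
    nlinarith
  have hsplit : s⁻¹ = 2 * (1 / (2 * s)) := by field_simp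
  have h2s : (0:ℝ) < 1 / (2 * s) := by positivity
  have hxpos : 0 < x := by rw [hx, hsplit]; linarith
  have hxle : x ≤ s⁻¹ := by
    rw [hx]
    have : 0 ≤ r := by rw [hr]; positivity
    linarith
  -- v * x = s - 4D/v
  have hvx : v * x = s - 4 * D / v := by
    rw [hx, hr, ← hs2]
    field_simp
  -- 1/x ≤ s + 8D/v
  have hinv : x⁻¹ ≤ s + 8 * D / v := by
    rw [inv_eq_one_div, div_le_iff₀ hxpos, hx, hr, ← hs2]
    have hD8' : 8 * D ≤ s ^ 3 := by nlinarith
    have key : (s + 8 * D / s ^ 2) * (s⁻¹ - 4 * D / (s ^ 2) ^ 2)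
        = 1 + 4 * D * (s ^ 3 - 8 * D) / s ^ 6 := by
      field_simp
      ring
    rw [key]
    have h0 : 0 ≤ 4 * D * (s ^ 3 - 8 * D) / s ^ 6 := by
      apply div_nonneg _ (by positivity)
      have : 0 ≤ s ^ 3 - 8 * D := by linarith
      positivity
    linarith
  -- D x² ≤ D / v
  have hdx : D * x ^ 2 ≤ D / v := by
    have hx2 : x ^ 2 ≤ 1 / v := by
      have h1 : x ^ 2 ≤ (s⁻¹) ^ 2 := by nlinarith
      calc x ^ 2 ≤ (s⁻¹) ^ 2 := h1
        _ = 1 / v := by rw [← hs2]; field_simp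
    calc D * x ^ 2 ≤ D * (1 / v) := by nlinarith
      _ = D / v := by ring
  have hsum : D * x ^ 2 + x⁻¹ + v * x ≤ 2 * s + 5 * D / v := by
    rw [hvx]
    have : 5 * D / v = D / v + 8 * D / v - 4 * D / v := by ring
    linarith
  -- real part bound
  have hcast : ((x : ℂ))⁻¹ = ((x⁻¹ : ℝ) : ℂ) := by push_cast; ring
  have hcast2 : (v : ℂ) * (x : ℂ) = ((v * x : ℝ) : ℂ) := by push_cast; ring
  have hre_eq : (Kx - ((x : ℂ))⁻¹ - (v : ℂ) * (x : ℂ)).re = Kx.re - x⁻¹ - v * x := by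
    rw [hcast, hcast2]
    simp [Complex.sub_re, Complex.ofReal_re]
  have hre : Kx.re ≤ 2 * s + 5 * D / v := by
    have h1 := Complex.re_le_norm (Kx - ((x : ℂ))⁻¹ - (v : ℂ) * (x : ℂ))
    rw [hre_eq] at h1
    linarith
  exact ⟨hxpos, hre, fun y hy => by
    have : Kx.re = y := by rw [hy, Complex.ofReal_re]
    linarith⟩
end

section
/- Let m > 0, v > 0, D > 0 with m > 4/√v and D/v^{3/2} ≤ 1/8, and set r = 4D/v². Let K be holomorphic on the punctured disc A = {z ∈ ℂ : 0 < |z| < m}, taking real values at all real points of A, and satisfying |K(z) − 1/z − v·z| ≤ D·|z|² and |K′(z) + 1/z² − v| ≤ 2D·|z| for all z ∈ A. Let I = [−v^{−1/2} + r, 0) ∪ (0, v^{−1/2} − r] ⊆ ℝ. Then K is injective on I, and the image K(I) (a set of real numbers) contains (−∞, −2√v − 5D/v) ∪ (2√v + 5D/v, ∞). -/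
open Metric

set_option maxHeartbeats 1000000 in
/-- Under the stated hypotheses, `K` maps `I = [−v^{-1/2}+r, 0) ∪ (0, v^{-1/2}−r]`
injectively onto a set of reals containing
`(−∞, −2√v − 5D/v) ∪ (2√v + 5D/v, ∞)`. -/
theorem stmt_14 (m v D : ℝ) (hm : 0 < m) (hv : 0 < v) (hD : 0 < D)
    (hmv : 4 / Real.sqrt v < m) (hDv : D / (v * Real.sqrt v) ≤ 1 / 8)
    (r : ℝ) (hr : r = 4 * D / v ^ 2)
    (A : Set ℂ) (hA : A = ball (0 : ℂ) m \ {0})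
    (K : ℂ → ℂ) (hK : DifferentiableOn ℂ K A)
    (hreal : ∀ x : ℝ, 0 < |x| → |x| < m → (K (x : ℂ)).im = 0)
    (hK1 : ∀ z ∈ A, ‖K z - z⁻¹ - (v : ℂ) * z‖ ≤ D * ‖z‖ ^ 2)
    (hK2 : ∀ z ∈ A, ‖deriv K z + (z ^ 2)⁻¹ - (v : ℂ)‖ ≤ 2 * D * ‖z‖)
    (I : Set ℝ) (hI : I = {x : ℝ | x ≠ 0 ∧ |x| ≤ (Real.sqrt v)⁻¹ - r}) :
    Set.InjOn (fun x : ℝ => K (x : ℂ)) I ∧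
    ∀ y : ℝ, 2 * Real.sqrt v + 5 * D / v < |y| → ∃ x ∈ I, K (x : ℂ) = (y : ℂ) := by
  set w := Real.sqrt v with hwdef
  clear_value w
  have hw : 0 < w := by rw [hwdef]; exact Real.sqrt_pos.mpr hv
  have hwv : w ^ 2 = v := by rw [hwdef]; exact Real.sq_sqrt hv.le
  have hD8 : 8 * D ≤ w ^ 3 := by
    rw [div_le_iff₀ (by positivity)] at hDv
    nlinarith [hDv]
  have hr0 : 0 < r := by rw [hr]; positivity
  have hrw4 : r * w ^ 4 = 4 * D := by
    rw [hr, ← hwv]; field_simp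
  have hrw2 : r * w ≤ 1 / 2 := by nlinarith [pow_pos hw 3]
  set c := w⁻¹ - r with hcdef
  clear_value c
  have hcw : c * w = 1 - r * w := by
    rw [hcdef, sub_mul, inv_mul_cancel₀ hw.ne']
  have hc2 : w⁻¹ / 2 ≤ c := by
    have h2 : r ≤ w⁻¹ / 2 := by
      rw [← mul_le_mul_iff_of_pos_right hw, div_mul_eq_mul_div, inv_mul_cancel₀ hw.ne']
      linarith [hrw2]
    linarith
  have hc0 : 0 < c := lt_of_lt_of_le (by positivity) hc2
  have hcs : c ≤ w⁻¹ := by rw [hcdef]; linarith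
  have hcm : c < m := by
    have h1 : w⁻¹ ≤ 4 / w := by
      rw [div_eq_mul_inv]; nlinarith [inv_pos.mpr hw]
    linarith [hcs, hmv]
  have hcu : c⁻¹ ≤ 2 * w := by
    have h1 : ((2 * w)⁻¹) ≤ c := by
      rw [mul_inv, inv_eq_one_div 2]; linarith [hc2]
    calc c⁻¹ ≤ ((2 * w)⁻¹)⁻¹ := by
          apply inv_anti₀ (by positivity) h1
      _ = 2 * w := by rw [inv_inv]
  have hDvw : D / v ≤ w / 8 := by
    rw [div_le_div_iff₀ hv (by norm_num), ← hwv]; nlinarith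
  -- membership in A
  have hmemA : ∀ x : ℝ, x ≠ 0 → |x| ≤ c → (x : ℂ) ∈ A := by
    intro x hx hxc
    rw [hA]
    refine ⟨?_, ?_⟩
    · simp only [mem_ball, dist_zero_right, Complex.norm_real, Real.norm_eq_abs]
      exact lt_of_le_of_lt hxc hcm
    · simp [Complex.ofReal_eq_zero, hx]
  set f : ℝ → ℝ := fun x => (K x).re with hfdef
  have hfre : ∀ x : ℝ, f x = (K x).re := fun _ => rfl
  clear_value f
  have hKf : ∀ x : ℝ, x ≠ 0 → |x| ≤ c → K x = (f x : ℂ) := by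
    intro x hx hxc
    apply Complex.ext
    · simp [hfre]
    · simp only [Complex.ofReal_im]
      exact hreal x (abs_pos.mpr hx) (lt_of_le_of_lt hxc hcm)
  -- bound 1
  have hB1 : ∀ x : ℝ, x ≠ 0 → |x| ≤ c → |f x - (x⁻¹ + v * x)| ≤ D * x ^ 2 := by
    intro x hx hxc
    have h := hK1 x (hmemA x hx hxc)
    have he : K x - (x : ℂ)⁻¹ - (v : ℂ) * x = K x - ((x⁻¹ + v * x : ℝ) : ℂ) := by
      push_cast; ring
    rw [he] at h
    calc |f x - (x⁻¹ + v * x)| = |(K x - ((x⁻¹ + v * x : ℝ) : ℂ)).re| := by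
          simp [hfre]
      _ ≤ ‖K x - ((x⁻¹ + v * x : ℝ) : ℂ)‖ := Complex.abs_re_le_norm _
      _ ≤ D * ‖(x : ℂ)‖ ^ 2 := h
      _ = D * x ^ 2 := by rw [Complex.norm_real, Real.norm_eq_abs, sq_abs]
  have hDc2 : ∀ x : ℝ, |x| ≤ c → D * x ^ 2 ≤ D / v := by
    intro x hxc
    rw [div_eq_mul_inv]
    apply mul_le_mul_of_nonneg_left _ hD.le
    have h1 : x ^ 2 ≤ c ^ 2 := by nlinarith [sq_abs x, abs_nonneg x]
    have h2 : c ^ 2 ≤ (w ^ 2)⁻¹ := by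
      rw [← inv_pow]; exact pow_le_pow_left₀ hc0.le hcs 2
    rw [← hwv]; linarith
  -- derivative
  have hAopen : IsOpen A := by
    rw [hA]; exact isOpen_ball.sdiff isClosed_singleton
  have hderiv : ∀ x : ℝ, x ≠ 0 → |x| ≤ c → HasDerivAt f ((deriv K x).re) x := by
    intro x hx hxc
    have hxA := hmemA x hx hxc
    have hd : DifferentiableAt ℂ K x :=
      (hK x hxA).differentiableAt (hAopen.mem_nhds hxA)
    rw [hfdef]; exact hd.hasDerivAt.real_of_complex
  have hderiv_neg : ∀ x : ℝ, x ≠ 0 → |x| ≤ c → (deriv K x).re < 0 := by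
    intro x hx hxc
    have h := hK2 x (hmemA x hx hxc)
    have he : deriv K (x : ℂ) + ((x : ℂ) ^ 2)⁻¹ - (v : ℂ)
        = deriv K x - ((v - (x ^ 2)⁻¹ : ℝ) : ℂ) := by
      push_cast; ring
    rw [he] at h
    have hre : |(deriv K x).re - (v - (x ^ 2)⁻¹)| ≤ 2 * D * |x| := by
      calc |(deriv K x).re - (v - (x ^ 2)⁻¹)|
          = |(deriv K ↑x - ((v - (x ^ 2)⁻¹ : ℝ) : ℂ)).re| := by
            rw [Complex.sub_re, Complex.ofReal_re]
        _ ≤ ‖deriv K ↑x - ((v - (x ^ 2)⁻¹ : ℝ) : ℂ)‖ := Complex.abs_re_le_norm _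
        _ ≤ 2 * D * ‖(x : ℂ)‖ := h
        _ = 2 * D * |x| := by rw [Complex.norm_real, Real.norm_eq_abs]
    have hx0 : 0 < |x| := abs_pos.mpr hx
    have hx2pos : 0 < x ^ 2 := by positivity
    have hxx : x ^ 2 ≤ c ^ 2 := by nlinarith [sq_abs x, abs_nonneg x]
    have hinv : (c ^ 2)⁻¹ ≤ (x ^ 2)⁻¹ := inv_anti₀ hx2pos hxx
    have h6 : v + 6 * D / w ≤ (c ^ 2)⁻¹ := by
      rw [inv_eq_one_div, le_div_iff₀ (by positivity)]
      have hcw2 : c ^ 2 * w ^ 2 = (1 - r * w) ^ 2 := by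
        rw [show c ^ 2 * w ^ 2 = (c * w) ^ 2 by ring, hcw]
      have hvc : v * c ^ 2 = (1 - r * w) ^ 2 := by
        rw [← hwv]; linarith [hcw2]
      have ht0 : 0 < r * w := mul_pos hr0 hw
      have h1 : 6 * D / w = 3 / 2 * (r * w) * w ^ 2 := by
        rw [div_eq_iff hw.ne']; linarith [hrw4]
      rw [h1]
      have h2 : (r * w) * (c ^ 2 * w ^ 2) = (r * w) * (1 - r * w) ^ 2 := by rw [hcw2]
      have hcube : 0 ≤ (1 / 2 - r * w) * (r * w) ^ 2 :=
        mul_nonneg (by linarith [hrw2]) (sq_nonneg _)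
      nlinarith [hvc, h2, ht0, hrw2, hcube, sq_nonneg (r * w)]
    have hDabs : 2 * D * |x| ≤ 2 * D / w := by
      have h1 : |x| ≤ w⁻¹ := le_trans hxc hcs
      rw [div_eq_mul_inv]; nlinarith [hD, h1]
    have hDpos : 0 < D / w := by positivity
    have hup : (deriv K x).re ≤ v - (x ^ 2)⁻¹ + 2 * D * |x| := by
      cases' abs_le.mp hre with h1 h2; linarith
    have h26 : 2 * D / w < 6 * D / w := by
      rw [div_lt_div_iff₀ hw hw]; nlinarith
    linarith [hinv, h6, hup, hDabs, h26]
  -- AM-GM lower bound on positive side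
  have hAM : ∀ x : ℝ, 0 < x → 2 * w ≤ x⁻¹ + v * x := by
    intro x hx
    have h : (x⁻¹ + v * x - 2 * w) * x = (1 - w * x) ^ 2 := by
      rw [← hwv]; field_simp; ring
    nlinarith [sq_nonneg (1 - w * x), hx]
  have hDvsmall : D / v ≤ w / 8 := hDvw
  -- positivity of f on the right, negativity on the left
  have hposf : ∀ x : ℝ, 0 < x → x ≤ c → 0 < f x := by
    intro x hx hxc
    have habs : |x| ≤ c := by rwa [abs_of_pos hx]
    have hb := hB1 x hx.ne' habs
    have h1 := hAM x hx
    have h2 := hDc2 x habs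
    cases' abs_le.mp hb with h3 h4
    linarith [hw]
  have hnegf : ∀ x : ℝ, -c ≤ x → x < 0 → f x < 0 := by
    intro x hx hxc
    have habs : |x| ≤ c := by rw [abs_of_neg hxc]; linarith
    have hb := hB1 x hxc.ne habs
    have h1 := hAM (-x) (by linarith)
    have h1' : x⁻¹ + v * x ≤ -(2 * w) := by
      rw [inv_neg] at h1; linarith
    have h2 := hDc2 x habs
    cases' abs_le.mp hb with h3 h4
    linarith [hw]
  -- endpoint bounds
  have hub : c⁻¹ + v * c ≤ 2 * w + 4 * D / v := by
    have key : (c⁻¹ + v * c - 2 * w) * c = (r * w) ^ 2 := by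
      have h : (c⁻¹ + v * c - 2 * w) * c = (1 - w * c) ^ 2 := by
        rw [← hwv]; field_simp; ring
      rw [h]
      have : w * c = 1 - r * w := by rw [mul_comm]; exact hcw
      rw [this]; ring
    have h2 : c⁻¹ + v * c - 2 * w = (r * w) ^ 2 * c⁻¹ := by
      rw [← div_eq_mul_inv]
      exact eq_div_of_mul_eq hc0.ne' key
    have h3 : (r * w) ^ 2 * c⁻¹ ≤ (r * w) ^ 2 * (2 * w) := by
      apply mul_le_mul_of_nonneg_left hcu (by positivity)
    have h4 : (r * w) ^ 2 * (2 * w) ≤ 4 * D / v := by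
      rw [le_div_iff₀ hv, ← hwv]
      have hrw1 : r * w ≤ 1 / 2 := hrw2
      nlinarith [hrw4, mul_pos hr0 hw, sq_nonneg (r * w)]
    linarith
  have hend : f c ≤ 2 * w + 5 * D / v := by
    have habs : |c| ≤ c := by rw [abs_of_pos hc0]
    have hb := hB1 c hc0.ne' habs
    have h2 := hDc2 c habs
    cases' abs_le.mp hb with h3 h4
    ring_nf at h3 h4 h2 hub ⊢
    linarith
  have hend' : -(2 * w + 5 * D / v) ≤ f (-c) := by
    have habs : |(-c)| ≤ c := by rw [abs_neg, abs_of_pos hc0]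
    have hb := hB1 (-c) (by simpa using hc0.ne') habs
    have h2 := hDc2 (-c) habs
    have he : (-c)⁻¹ + v * (-c) = -(c⁻¹ + v * c) := by rw [inv_neg]; ring
    rw [he] at hb
    cases' abs_le.mp hb with h3 h4
    ring_nf at h3 h4 h2 hub ⊢
    linarith
  -- strict antitonicity
  have hanti_pos : StrictAntiOn f (Set.Ioc 0 c) := by
    apply strictAntiOn_of_deriv_neg (convex_Ioc 0 c)
    · intro x hx
      exact ((hderiv x (ne_of_gt hx.1) (by rw [abs_of_pos hx.1]; exact hx.2)).continuousAt).continuousWithinAt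
    · intro x hx
      rw [interior_Ioc] at hx
      have hd := hderiv x (ne_of_gt hx.1) (by rw [abs_of_pos hx.1]; exact hx.2.le)
      rw [hd.deriv]
      exact hderiv_neg x (ne_of_gt hx.1) (by rw [abs_of_pos hx.1]; exact hx.2.le)
  have hanti_neg : StrictAntiOn f (Set.Ico (-c) 0) := by
    apply strictAntiOn_of_deriv_neg (convex_Ico (-c) 0)
    · intro x hx
      exact ((hderiv x (ne_of_lt hx.2) (by rw [abs_of_neg hx.2]; linarith [hx.1])).continuousAt).continuousWithinAt
    · intro x hx
      rw [interior_Ico] at hx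
      have habs : |x| ≤ c := by rw [abs_of_neg hx.2]; linarith [hx.1]
      have hd := hderiv x (ne_of_lt hx.2) habs
      rw [hd.deriv]
      exact hderiv_neg x (ne_of_lt hx.2) habs
  constructor
  · -- injectivity
    intro a ha b hb hab
    rw [hI] at ha hb
    obtain ⟨ha0, hac⟩ := ha
    obtain ⟨hb0, hbc⟩ := hb
    have hfab : f a = f b := by
      have := congrArg Complex.re hab
      simpa [hfre] using this
    rcases ha0.lt_or_gt with haneg | hapos <;> rcases hb0.lt_or_gt with hbneg | hbpos
    · apply hanti_neg.injOn _ _ hfab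
      · exact ⟨by rw [abs_of_neg haneg] at hac; linarith, haneg⟩
      · exact ⟨by rw [abs_of_neg hbneg] at hbc; linarith, hbneg⟩
    · exfalso
      have h1 := hnegf a (by rw [abs_of_neg haneg] at hac; linarith) haneg
      have h2 := hposf b hbpos (by rw [abs_of_pos hbpos] at hbc; linarith)
      linarith [hfab]
    · exfalso
      have h1 := hposf a hapos (by rw [abs_of_pos hapos] at hac; linarith)
      have h2 := hnegf b (by rw [abs_of_neg hbneg] at hbc; linarith) hbneg
      linarith [hfab]
    · apply hanti_pos.injOn _ _ hfab
      · exact ⟨hapos, by rw [abs_of_pos hapos] at hac; linarith⟩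
      · exact ⟨hbpos, by rw [abs_of_pos hbpos] at hbc; linarith⟩
  · -- surjectivity
    intro y hy
    have hpos5 : 0 < 2 * w + 5 * D / v := by positivity
    have hy0 : y ≠ 0 := by
      intro h; rw [h, abs_zero] at hy; linarith
    rcases hy0.lt_or_gt with hyneg | hypos
    · -- y < 0
      rw [abs_of_neg hyneg] at hy
      set B := -y + D / v with hBdef
      have hB : 0 < B := add_pos (by linarith) (by positivity)
      set x₀ := min c B⁻¹ with hx₀def
      have hx₀pos : 0 < x₀ := lt_min hc0 (by positivity)
      have hx₀c : x₀ ≤ c := min_le_left _ _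
      have hx₀B : B ≤ x₀⁻¹ := by
        have h1 : x₀ ≤ B⁻¹ := min_le_right _ _
        calc B = (B⁻¹)⁻¹ := (inv_inv B).symm
          _ ≤ x₀⁻¹ := inv_anti₀ hx₀pos h1
      have habs : |(-x₀)| ≤ c := by rw [abs_neg, abs_of_pos hx₀pos]; exact hx₀c
      have hfx₀ : f (-x₀) ≤ y := by
        have hb := hB1 (-x₀) (by simpa using hx₀pos.ne') habs
        have he : (-x₀)⁻¹ + v * (-x₀) = -(x₀⁻¹ + v * x₀) := by rw [inv_neg]; ring
        rw [he] at hb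
        cases' abs_le.mp hb with h3 h4
        have h5 : D * (-x₀) ^ 2 ≤ D / v := hDc2 (-x₀) habs
        nlinarith [mul_pos hv hx₀pos]
      have hfc : y < f (-c) := by
        calc y < -(2 * w + 5 * D / v) := by linarith
          _ ≤ f (-c) := hend'
      have hcont : ContinuousOn f (Set.Icc (-c) (-x₀)) := by
        intro x hx
        have hx0 : x ≠ 0 := by
          intro h; rw [h] at hx; exact absurd hx.2 (by simpa using hx₀pos)
        have habs' : |x| ≤ c := by
          rw [abs_of_neg (lt_of_le_of_lt hx.2 (by simpa using hx₀pos))]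
          linarith [hx.1]
        exact ((hderiv x hx0 habs').continuousAt).continuousWithinAt
      have hmem : y ∈ Set.Icc (f (-x₀)) (f (-c)) := ⟨hfx₀, hfc.le⟩
      obtain ⟨x, hxmem, hfx⟩ := intermediate_value_Icc' (by linarith [hx₀c] : -c ≤ -x₀) hcont hmem
      refine ⟨x, ?_, ?_⟩
      · rw [hI]
        have hxneg : x < 0 := lt_of_le_of_lt hxmem.2 (by simpa using hx₀pos)
        exact ⟨hxneg.ne, by rw [abs_of_neg hxneg]; linarith [hxmem.1]⟩
      · have hxneg : x < 0 := lt_of_le_of_lt hxmem.2 (by simpa using hx₀pos)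
        have habs' : |x| ≤ c := by rw [abs_of_neg hxneg]; linarith [hxmem.1]
        rw [hKf x hxneg.ne habs', hfx]
    · -- y > 0
      rw [abs_of_pos hypos] at hy
      set B := y + D / v with hBdef
      have hB : 0 < B := add_pos (by linarith) (by positivity)
      set x₀ := min c B⁻¹ with hx₀def
      have hx₀pos : 0 < x₀ := lt_min hc0 (by positivity)
      have hx₀c : x₀ ≤ c := min_le_left _ _
      have hx₀B : B ≤ x₀⁻¹ := by
        have h1 : x₀ ≤ B⁻¹ := min_le_right _ _
        calc B = (B⁻¹)⁻¹ := (inv_inv B).symm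
          _ ≤ x₀⁻¹ := inv_anti₀ hx₀pos h1
      have habs : |x₀| ≤ c := by rw [abs_of_pos hx₀pos]; exact hx₀c
      have hfx₀ : y ≤ f x₀ := by
        have hb := hB1 x₀ hx₀pos.ne' habs
        cases' abs_le.mp hb with h3 h4
        have h5 : D * x₀ ^ 2 ≤ D / v := hDc2 x₀ habs
        nlinarith [mul_pos hv hx₀pos]
      have hfc : f c < y := lt_of_le_of_lt hend hy
      have hcont : ContinuousOn f (Set.Icc x₀ c) := by
        intro x hx
        have hx0 : 0 < x := lt_of_lt_of_le hx₀pos hx.1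
        have habs' : |x| ≤ c := by rw [abs_of_pos hx0]; exact hx.2
        exact ((hderiv x hx0.ne' habs').continuousAt).continuousWithinAt
      have hmem : y ∈ Set.Icc (f c) (f x₀) := ⟨hfc.le, hfx₀⟩
      obtain ⟨x, hxmem, hfx⟩ := intermediate_value_Icc' hx₀c hcont hmem
      refine ⟨x, ?_, ?_⟩
      · rw [hI]
        have hxpos : 0 < x := lt_of_lt_of_le hx₀pos hxmem.1
        exact ⟨hxpos.ne', by rw [abs_of_pos hxpos]; exact hxmem.2⟩
      · have hxpos : 0 < x := lt_of_lt_of_le hx₀pos hxmem.1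
        have habs' : |x| ≤ c := by rw [abs_of_pos hxpos]; exact hxmem.2
        rw [hKf x hxpos.ne' habs', hfx]
end

section
/- Let m > 0, v > 0, D > 0 with m > 4/√v and D/v^{3/2} ≤ 1/8, and set r = 4D/v². Let K be holomorphic on the punctured disc A = {z ∈ ℂ : 0 < |z| < m}, taking real values at all real points of A, and satisfying |K(z) − 1/z − v·z| ≤ D·|z|² and |K′(z) + 1/z² − v| ≤ 2D·|z| for all z ∈ A. Then there exist R₀ > 0, an open set S ⊆ ℂ containing both {x ∈ ℝ : |x| > 2√v + 5D/v} and {z ∈ ℂ : |z| > R₀}, and a function G holomorphic on S such that for every w ∈ S one has G(w) ∈ A and K(G(w)) = w. -/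
open Metric Set Filter Function
open scoped Topology

lemma stmt15_num {v D m : ℝ} (hv : 0 < v) (hD : 0 < D) (hm : 0 < m)
    (hmv : 4 / Real.sqrt v < m) (hDv : D / (v * Real.sqrt v) ≤ 1 / 8) :
    ∃ ρ : ℝ, 0 < ρ ∧ ρ < m ∧ 2 * D * ρ < (ρ ^ 2)⁻¹ - v ∧
      0 < ρ⁻¹ - v * ρ - D * ρ ^ 2 ∧
      ρ⁻¹ + v * ρ + D * ρ ^ 2 < 2 * Real.sqrt v + 5 * D / v := by
  set w := Real.sqrt v with hwdef
  have hw : 0 < w := Real.sqrt_pos.mpr hv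
  have hwv : w ^ 2 = v := Real.sq_sqrt hv.le
  set τ := D / (v * w) with hτdef
  have hτ0 : 0 < τ := div_pos hD (by positivity)
  have hτ8 : τ ≤ 1 / 8 := hDv
  have hDeq : D = τ * (v * w) := by
    rw [hτdef]; field_simp
  set a := 1 - 3 * τ with hadef
  have ha0 : (5:ℝ)/8 ≤ a := by rw [hadef]; linarith
  have ha0' : 0 < a := by linarith
  have ha1 : a < 1 := by rw [hadef]; linarith
  refine ⟨a / w, by positivity, ?_, ?_, ?_, ?_⟩
  · calc a / w < 4 / w := by gcongr <;> linarith
        _ < m := hmv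
  · have e1 : ((a / w) ^ 2)⁻¹ = w ^ 2 / a ^ 2 := by
      rw [div_pow, inv_div]
    have e2 : 2 * D * (a / w) = 2 * τ * w ^ 2 * a := by
      rw [hDeq, ← hwv]; field_simp
    rw [e1, e2, ← hwv]
    rw [div_sub' (by positivity)]
    rw [lt_div_iff₀ (by positivity)]
    have key : 2 * a ^ 3 * τ < 1 - a ^ 2 := by
      rw [hadef]; nlinarith [sq_nonneg τ, sq_nonneg (1 - 3*τ)]
    nlinarith [sq_nonneg w, sq_nonneg a, mul_pos hw hw]
  · have e1 : (a / w)⁻¹ = w / a := by rw [inv_div]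
    have e2 : v * (a / w) = w * a := by rw [← hwv]; field_simp
    have e3 : D * (a / w) ^ 2 = τ * w * a ^ 2 := by
      rw [hDeq, ← hwv]; field_simp
    rw [e1, e2, e3]
    have key : τ * a ^ 3 < 1 - a ^ 2 := by
      rw [hadef]; nlinarith [sq_nonneg τ]
    have : w / a - w * a - τ * w * a ^ 2 = w * ((1 - a ^ 2) - τ * a ^ 3) / a := by
      field_simp
    rw [this]; exact div_pos (mul_pos hw (by linarith)) ha0'
  · have e1 : (a / w)⁻¹ = w / a := by rw [inv_div]
    have e2 : v * (a / w) = w * a := by rw [← hwv]; field_simp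
    have e3 : D * (a / w) ^ 2 = τ * w * a ^ 2 := by
      rw [hDeq, ← hwv]; field_simp
    have e4 : 5 * D / v = 5 * τ * w := by rw [hDeq, ← hwv]; field_simp
    rw [e1, e2, e3, e4]
    have key : 1 + a ^ 2 + τ * a ^ 3 < (2 + 5 * τ) * a := by
      rw [hadef]; nlinarith [sq_nonneg τ, mul_pos hτ0 hτ0]
    have expand : 2 * w + 5 * τ * w - (w / a + w * a + τ * w * a ^ 2)
        = w * ((2 + 5 * τ) * a - (1 + a ^ 2 + τ * a ^ 3)) / a := by
      field_simp
    have : 0 < 2 * w + 5 * τ * w - (w / a + w * a + τ * w * a ^ 2) := by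
      rw [expand]; exact div_pos (mul_pos hw (by linarith)) ha0'
    linarith

lemma stmt15_inj {v D ρ : ℝ} (hv : 0 < v) (hD : 0 < D) (hρ : 0 < ρ)
    (hF3 : 2 * D * ρ < (ρ ^ 2)⁻¹ - v) {K : ℂ → ℂ}
    (hKd : ∀ z ∈ ball (0:ℂ) ρ \ {0}, DifferentiableAt ℂ K z)
    (hK1 : ∀ z ∈ ball (0:ℂ) ρ \ {0}, ‖K z - z⁻¹ - (v:ℂ) * z‖ ≤ D * ‖z‖ ^ 2)
    (hK2 : ∀ z ∈ ball (0:ℂ) ρ \ {0}, ‖deriv K z + (z ^ 2)⁻¹ - (v:ℂ)‖ ≤ 2 * D * ‖z‖) :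
    Set.InjOn K (ball (0:ℂ) ρ \ {0}) := by
  set Ω := ball (0:ℂ) ρ \ {0} with hΩdef
  have hmem : ∀ z ∈ Ω, z ≠ 0 ∧ 0 < ‖z‖ ∧ ‖z‖ < ρ := by
    rintro z ⟨h1, h2⟩
    have hz0 : z ≠ 0 := h2
    exact ⟨hz0, norm_pos_iff.mpr hz0, mem_ball_zero_iff.mp h1⟩
  intro z1 hz1 z2 hz2 hKeq
  by_contra hne
  obtain ⟨hz10, hz1p, hz1ρ⟩ := hmem z1 hz1
  obtain ⟨hz20, hz2p, hz2ρ⟩ := hmem z2 hz2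
  set e : ℂ → ℂ := fun z => K z - z⁻¹ - (v:ℂ) * z with hedef
  -- the key identity
  have hid : e z1 - e z2 = (z1 - z2) * ((z1 * z2)⁻¹ - (v:ℂ)) := by
    simp only [hedef]
    rw [hKeq]
    field_simp
    ring
  -- lower bound for the factor
  have hlow : (ρ ^ 2)⁻¹ - v ≤ ‖(z1 * z2)⁻¹ - (v:ℂ)‖ := by
    have h1 : ‖(z1 * z2)⁻¹‖ - ‖(v:ℂ)‖ ≤ ‖(z1 * z2)⁻¹ - (v:ℂ)‖ := norm_sub_norm_le _ _
    have h2 : ‖(v:ℂ)‖ = v := by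
      rw [Complex.norm_real, Real.norm_eq_abs, abs_of_pos hv]
    have h3 : ‖(z1 * z2)⁻¹‖ = (‖z1‖ * ‖z2‖)⁻¹ := by
      rw [norm_inv, norm_mul]
    have h4 : ‖z1‖ * ‖z2‖ ≤ ρ ^ 2 := by nlinarith
    have h5 : (ρ ^ 2)⁻¹ ≤ (‖z1‖ * ‖z2‖)⁻¹ :=
      inv_anti₀ (by positivity) h4
    rw [h2, h3] at h1
    linarith
  -- upper bound for ‖e z1 - e z2‖
  have hub : ‖e z1 - e z2‖ ≤ 2 * D * ρ * ‖z1 - z2‖ := by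
    by_cases hseg : (0:ℂ) ∈ segment ℝ z1 z2
    · -- the segment passes through 0 : z2 is a negative real multiple of z1
      obtain ⟨p, q, hp, hq, hpq, hsum⟩ := hseg
      have hp0 : p ≠ 0 := by
        rintro rfl
        simp only [zero_smul, zero_add] at hsum hpq
        rw [hpq] at hsum
        simp at hsum
        exact hz20 hsum
      have hq0 : q ≠ 0 := by
        rintro rfl
        simp only [zero_smul, add_zero] at hsum hpq
        rw [hpq] at hsum
        simp at hsum
        exact hz10 hsum
      have hpp : 0 < p := lt_of_le_of_ne hp (Ne.symm hp0)
      have hqp : 0 < q := lt_of_le_of_ne hq (Ne.symm hq0)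
      have hz2eq : z2 = -((p/q : ℝ) : ℂ) * z1 := by
        have : (p:ℂ) * z1 + (q:ℂ) * z2 = 0 := by
          simpa [Complex.real_smul] using hsum
        have hqC : (q:ℂ) ≠ 0 := by exact_mod_cast hq0
        have h' : z2 = -((p:ℂ) * z1) / q := by
          rw [eq_div_iff hqC]; linear_combination this
        rw [h']; push_cast; ring
      have hnorm2 : ‖z2‖ = (p/q) * ‖z1‖ := by
        rw [hz2eq]
        rw [norm_mul, norm_neg, Complex.norm_real, Real.norm_eq_abs,
          abs_of_pos (div_pos hpp hqp)]
      have hnorm12 : ‖z1 - z2‖ = ‖z1‖ + ‖z2‖ := by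
        have hdiff : z1 - z2 = ((1 + p/q : ℝ) : ℂ) * z1 := by
          rw [hz2eq]; push_cast; ring
        rw [hdiff, hnorm2, norm_mul, Complex.norm_real, Real.norm_eq_abs,
          abs_of_pos (by positivity : (0:ℝ) < 1 + p/q)]
        ring
      have he1 : ‖e z1‖ ≤ D * ρ * ‖z1‖ := by
        have h := hK1 z1 hz1
        simp only [hedef]
        nlinarith [mul_pos hD hz1p]
      have he2 : ‖e z2‖ ≤ D * ρ * ‖z2‖ := by
        have h := hK1 z2 hz2
        simp only [hedef]
        nlinarith [mul_pos hD hz2p]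
      calc ‖e z1 - e z2‖ ≤ ‖e z1‖ + ‖e z2‖ := norm_sub_le _ _
        _ ≤ D * ρ * ‖z1‖ + D * ρ * ‖z2‖ := by linarith
        _ = D * ρ * ‖z1 - z2‖ := by rw [hnorm12]; ring
        _ ≤ 2 * D * ρ * ‖z1 - z2‖ := by
            nlinarith [mul_nonneg (mul_nonneg hD.le hρ.le) (norm_nonneg (z1 - z2))]
    · -- the segment stays inside Ω : mean value inequality
      have hsub : segment ℝ z1 z2 ⊆ Ω := by
        intro x hx
        refine ⟨(convex_ball (0:ℂ) ρ).segment_subset hz1.1 hz2.1 hx, ?_⟩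
        intro h0
        rw [mem_singleton_iff] at h0
        exact hseg (h0 ▸ hx)
      have hder : ∀ x ∈ segment ℝ z1 z2,
          HasDerivWithinAt e (deriv K x + (x ^ 2)⁻¹ - (v:ℂ)) (segment ℝ z1 z2) x := by
        intro x hx
        have hxΩ := hsub hx
        obtain ⟨hx0, -, -⟩ := hmem x hxΩ
        have h1 : HasDerivAt K (deriv K x) x := (hKd x hxΩ).hasDerivAt
        have h2 : HasDerivAt (fun z : ℂ => z⁻¹) (-(x ^ 2)⁻¹) x := hasDerivAt_inv hx0
        have h3 : HasDerivAt (fun z : ℂ => (v:ℂ) * z) ((v:ℂ) * 1) x :=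
          (hasDerivAt_id x).const_mul _
        have := (h1.sub h2).sub h3
        have heq : deriv K x - -(x ^ 2)⁻¹ - (v:ℂ) * 1 = deriv K x + (x ^ 2)⁻¹ - (v:ℂ) := by
          ring
        rw [heq] at this
        exact this.hasDerivWithinAt
      have hbd : ∀ x ∈ segment ℝ z1 z2, ‖deriv K x + (x ^ 2)⁻¹ - (v:ℂ)‖ ≤ 2 * D * ρ := by
        intro x hx
        have hxΩ := hsub hx
        obtain ⟨-, -, hxρ⟩ := hmem x hxΩ
        have := hK2 x hxΩ
        nlinarith [norm_nonneg x]
      have := (convex_segment z1 z2).norm_image_sub_le_of_norm_hasDerivWithin_le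
        hder hbd (right_mem_segment ℝ z1 z2) (left_mem_segment ℝ z1 z2)
      exact this
  -- combine
  have hnz : 0 < ‖z1 - z2‖ := by
    rw [norm_pos_iff]
    exact sub_ne_zero_of_ne hne
  have hchain : ‖z1 - z2‖ * ((ρ ^ 2)⁻¹ - v) ≤ 2 * D * ρ * ‖z1 - z2‖ := by
    calc ‖z1 - z2‖ * ((ρ ^ 2)⁻¹ - v) ≤ ‖z1 - z2‖ * ‖(z1 * z2)⁻¹ - (v:ℂ)‖ := by
          apply mul_le_mul_of_nonneg_left hlow (norm_nonneg _)
      _ = ‖e z1 - e z2‖ := by rw [hid, norm_mul]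
      _ ≤ 2 * D * ρ * ‖z1 - z2‖ := hub
  nlinarith

lemma stmt15_real {v D m ρ : ℝ} (hv : 0 < v) (hD : 0 < D) (hm : 0 < m)
    (hρ : 0 < ρ) (hρm : ρ < m)
    (hF5 : ρ⁻¹ + v * ρ + D * ρ ^ 2 < 2 * Real.sqrt v + 5 * D / v)
    {K : ℂ → ℂ} (hKc : ContinuousOn K (ball (0:ℂ) m \ {0}))
    (hreal : ∀ x : ℝ, 0 < |x| → |x| < m → (K (x : ℂ)).im = 0)
    (hK1 : ∀ z ∈ ball (0:ℂ) m \ {0}, ‖K z - z⁻¹ - (v:ℂ) * z‖ ≤ D * ‖z‖ ^ 2)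
    (x : ℝ) (hx : 2 * Real.sqrt v + 5 * D / v < |x|) :
    ∃ z ∈ ball (0:ℂ) ρ \ {0}, K z = (x : ℂ) := by
  have hw : 0 < Real.sqrt v := Real.sqrt_pos.mpr hv
  have hB : 0 < 2 * Real.sqrt v + 5 * D / v := by positivity
  have hx0 : x ≠ 0 := by
    intro h; rw [h] at hx; simp at hx; linarith
  -- real bounds on (K s).re for 0 < |s| < m
  have hbound : ∀ s : ℝ, 0 < |s| → |s| < m → |(K (s:ℂ)).re - (s⁻¹ + v * s)| ≤ D * s ^ 2 := by
    intro s hs0 hsm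
    have hsA : (s:ℂ) ∈ ball (0:ℂ) m \ {0} := by
      constructor
      · rw [mem_ball_zero_iff, Complex.norm_real, Real.norm_eq_abs]; exact hsm
      · simp only [mem_singleton_iff, Complex.ofReal_eq_zero]
        intro h; rw [h] at hs0; simp at hs0
    have h1 := hK1 _ hsA
    have h2' : K (s:ℂ) - (s:ℂ)⁻¹ - (v:ℂ) * s = K (s:ℂ) - ((s⁻¹ + v * s : ℝ) : ℂ) := by
      push_cast; ring
    rw [h2'] at h1
    have h3 : |(K (s:ℂ) - ((s⁻¹ + v * s : ℝ) : ℂ)).re| ≤ ‖K (s:ℂ) - ((s⁻¹ + v * s : ℝ) : ℂ)‖ := by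
      exact Complex.abs_re_le_norm _
    rw [Complex.sub_re, Complex.ofReal_re] at h3
    have h4 : ‖(s:ℂ)‖ ^ 2 = s ^ 2 := by
      rw [Complex.norm_real, Real.norm_eq_abs, sq_abs]
    rw [h4] at h1
    linarith
  -- continuity of s ↦ (K s).re on real intervals inside (0,m) resp (-m,0)
  have hcont : ∀ a b : ℝ, (∀ s ∈ Icc a b, 0 < |s| ∧ |s| < m) →
      ContinuousOn (fun s : ℝ => (K (s:ℂ)).re) (Icc a b) := by
    intro a b hab
    apply Complex.continuous_re.comp_continuousOn
    apply hKc.comp Complex.continuous_ofReal.continuousOn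
    intro s hs
    obtain ⟨h1, h2⟩ := hab s hs
    constructor
    · rw [mem_ball_zero_iff, Complex.norm_real, Real.norm_eq_abs]; exact h2
    · simp only [mem_singleton_iff, Complex.ofReal_eq_zero]
      intro h; rw [h] at h1; simp at h1
  rcases lt_or_gt_of_ne hx0 with hxneg | hxpos
  · -- negative case
    have hxB : x < -(2 * Real.sqrt v + 5 * D / v) := by
      rw [abs_of_neg hxneg] at hx; linarith
    set s₀ := min (ρ/2) (-x + v * ρ + D * ρ ^ 2)⁻¹ with hs₀def
    have hxpos' : 0 < -x + v * ρ + D * ρ ^ 2 := by nlinarith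
    have hs₀pos : 0 < s₀ := lt_min (by positivity) (by positivity)
    have hs₀ρ : s₀ ≤ ρ/2 := min_le_left _ _
    have hs₀inv : -x + v * ρ + D * ρ ^ 2 ≤ s₀⁻¹ := by
      have h1 : s₀ ≤ (-x + v * ρ + D * ρ ^ 2)⁻¹ := min_le_right _ _
      calc -x + v * ρ + D * ρ ^ 2 = ((-x + v * ρ + D * ρ ^ 2)⁻¹)⁻¹ := by rw [inv_inv]
        _ ≤ s₀⁻¹ := by apply inv_anti₀ hs₀pos h1
    have hmemI : ∀ s ∈ Icc (-ρ) (-s₀), 0 < |s| ∧ |s| < m := by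
      intro s hs
      have h1 : s < 0 := lt_of_le_of_lt hs.2 (by linarith)
      rw [abs_of_neg h1]
      constructor
      · linarith
      · have := hs.1; linarith
    have hk := hcont (-ρ) (-s₀) hmemI
    have hkρ : x < (K ((-ρ : ℝ):ℂ)).re := by
      have hb := hbound (-ρ) (by rw [abs_of_neg (by linarith)]; linarith)
        (by rw [abs_of_neg (by linarith)]; linarith)
      have h1 : (-ρ : ℝ)⁻¹ + v * (-ρ) = -(ρ⁻¹ + v * ρ) := by
        rw [inv_neg]; ring
      rw [h1] at hb
      have h2 : |(-ρ:ℝ)| = ρ := by rw [abs_of_neg (by linarith)]; ring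
      have h3 : (-ρ:ℝ)^2 = ρ^2 := by ring
      rw [h3] at hb
      have := abs_le.mp hb
      linarith [this.1]
    have hks₀ : (K ((-s₀ : ℝ):ℂ)).re ≤ x := by
      have hb := hbound (-s₀) (by rw [abs_of_neg (by linarith)]; linarith)
        (by rw [abs_of_neg (by linarith)]; linarith)
      have h1 : (-s₀ : ℝ)⁻¹ + v * (-s₀) = -(s₀⁻¹ + v * s₀) := by
        rw [inv_neg]; ring
      rw [h1] at hb
      have h3 : (-s₀:ℝ)^2 = s₀^2 := by ring
      rw [h3] at hb
      have := abs_le.mp hb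
      have hs₀ρ' : s₀ ≤ ρ := by linarith
      have h5 : D * s₀ ^ 2 ≤ D * ρ ^ 2 := by
        apply mul_le_mul_of_nonneg_left _ hD.le
        exact pow_le_pow_left₀ hs₀pos.le hs₀ρ' 2
      linarith [this.2, mul_pos hv hs₀pos, mul_pos hv hρ]
    have hab : (-ρ : ℝ) ≤ -s₀ := by linarith
    have := intermediate_value_Icc' hab hk
    have hxmem : x ∈ Icc ((K ((-s₀ : ℝ):ℂ)).re) ((K ((-ρ : ℝ):ℂ)).re) := ⟨hks₀, hkρ.le⟩
    obtain ⟨z, hzI, hzx'⟩ := this hxmem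
    replace hzx : (K ((z:ℝ):ℂ)).re = x := hzx'
    have hzρ : -ρ < z := by
      rcases eq_or_lt_of_le hzI.1 with h | h
      · exfalso; rw [← h] at hzx; rw [hzx] at hkρ; exact lt_irrefl _ hkρ
      · exact h
    have hz0 : z < 0 := lt_of_le_of_lt hzI.2 (by linarith)
    refine ⟨(z : ℂ), ⟨?_, ?_⟩, ?_⟩
    · rw [mem_ball_zero_iff, Complex.norm_real, Real.norm_eq_abs, abs_of_neg hz0]
      linarith
    · simp only [mem_singleton_iff, Complex.ofReal_eq_zero]
      exact hz0.ne
    · apply Complex.ext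
      · rw [hzx]; simp
      · rw [hreal z (by rw [abs_of_neg hz0]; linarith) (by rw [abs_of_neg hz0]; linarith)]
        simp
  · -- positive case
    have hxB : 2 * Real.sqrt v + 5 * D / v < x := by
      rw [abs_of_pos hxpos] at hx; linarith
    set s₀ := min (ρ/2) (x + v * ρ + D * ρ ^ 2)⁻¹ with hs₀def
    have hxpos' : 0 < x + v * ρ + D * ρ ^ 2 := by nlinarith
    have hs₀pos : 0 < s₀ := lt_min (by positivity) (by positivity)
    have hs₀ρ : s₀ ≤ ρ/2 := min_le_left _ _
    have hs₀inv : x + v * ρ + D * ρ ^ 2 ≤ s₀⁻¹ := by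
      have h1 : s₀ ≤ (x + v * ρ + D * ρ ^ 2)⁻¹ := min_le_right _ _
      calc x + v * ρ + D * ρ ^ 2 = ((x + v * ρ + D * ρ ^ 2)⁻¹)⁻¹ := by rw [inv_inv]
        _ ≤ s₀⁻¹ := by apply inv_anti₀ hs₀pos h1
    have hmemI : ∀ s ∈ Icc s₀ ρ, 0 < |s| ∧ |s| < m := by
      intro s hs
      have h1 : 0 < s := lt_of_lt_of_le hs₀pos hs.1
      rw [abs_of_pos h1]
      exact ⟨h1, lt_of_le_of_lt hs.2 hρm⟩
    have hk := hcont s₀ ρ hmemI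
    have hkρ : (K ((ρ : ℝ):ℂ)).re < x := by
      have hb := hbound ρ (by rw [abs_of_pos hρ]; linarith) (by rw [abs_of_pos hρ]; linarith)
      have := abs_le.mp hb
      linarith [this.2]
    have hks₀ : x ≤ (K ((s₀ : ℝ):ℂ)).re := by
      have hb := hbound s₀ (by rw [abs_of_pos hs₀pos]; linarith)
        (by rw [abs_of_pos hs₀pos]; linarith)
      have := abs_le.mp hb
      have hs₀ρ' : s₀ ≤ ρ := by linarith
      have h5 : D * s₀ ^ 2 ≤ D * ρ ^ 2 := by
        apply mul_le_mul_of_nonneg_left _ hD.le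
        exact pow_le_pow_left₀ hs₀pos.le hs₀ρ' 2
      linarith [this.1, mul_pos hv hs₀pos, mul_pos hv hρ]
    have hab : s₀ ≤ ρ := by linarith
    have := intermediate_value_Icc' hab hk
    have hxmem : x ∈ Icc ((K ((ρ : ℝ):ℂ)).re) ((K ((s₀ : ℝ):ℂ)).re) := ⟨hkρ.le, hks₀⟩
    obtain ⟨z, hzI, hzx'⟩ := this hxmem
    replace hzx : (K ((z:ℝ):ℂ)).re = x := hzx'
    have hzρ : z < ρ := by
      rcases eq_or_lt_of_le hzI.2 with h | h
      · exfalso; rw [h] at hzx; rw [hzx] at hkρ; exact lt_irrefl _ hkρ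
      · exact h
    have hz0 : 0 < z := lt_of_lt_of_le hs₀pos hzI.1
    refine ⟨(z : ℂ), ⟨?_, ?_⟩, ?_⟩
    · rw [mem_ball_zero_iff, Complex.norm_real, Real.norm_eq_abs, abs_of_pos hz0]
      exact hzρ
    · simp only [mem_singleton_iff, Complex.ofReal_eq_zero]
      exact hz0.ne'
    · apply Complex.ext
      · rw [hzx]; simp
      · rw [hreal z (by rw [abs_of_pos hz0]; linarith) (by rw [abs_of_pos hz0]; linarith)]
        simp

lemma stmt15_inf {v D ρ : ℝ} (hv : 0 < v) (hD : 0 < D) (hρ : 0 < ρ)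
    (hF4 : 0 < ρ⁻¹ - v * ρ - D * ρ ^ 2) {K : ℂ → ℂ}
    (hKd : DifferentiableOn ℂ K (ball (0:ℂ) ρ \ {0}))
    (hK1 : ∀ z ∈ ball (0:ℂ) ρ \ {0}, ‖K z - z⁻¹ - (v:ℂ) * z‖ ≤ D * ‖z‖ ^ 2) :
    ∃ R₀ : ℝ, 0 < R₀ ∧ ∀ w : ℂ, R₀ < ‖w‖ → ∃ z ∈ ball (0:ℂ) ρ \ {0}, K z = w := by
  set Ω := ball (0:ℂ) ρ \ {0} with hΩdef
  have hmem : ∀ z ∈ Ω, z ≠ 0 ∧ 0 < ‖z‖ ∧ ‖z‖ < ρ := by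
    rintro z ⟨h1, h2⟩
    have hz0 : z ≠ 0 := h2
    exact ⟨hz0, norm_pos_iff.mpr hz0, mem_ball_zero_iff.mp h1⟩
  -- lower bound for ‖K z‖ on Ω
  have hKlow : ∀ z ∈ Ω, ‖z‖⁻¹ - v * ‖z‖ - D * ‖z‖ ^ 2 ≤ ‖K z‖ := by
    intro z hz
    obtain ⟨hz0, hzp, hzρ⟩ := hmem z hz
    have h1 := hK1 z hz
    have h2 : ‖z⁻¹ + (v:ℂ) * z‖ - ‖K z‖ ≤ ‖K z - z⁻¹ - (v:ℂ) * z‖ := by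
      have := norm_sub_norm_le (z⁻¹ + (v:ℂ) * z) (K z)
      calc ‖z⁻¹ + (v:ℂ) * z‖ - ‖K z‖ ≤ ‖z⁻¹ + (v:ℂ) * z - K z‖ := this
        _ = ‖K z - z⁻¹ - (v:ℂ) * z‖ := by rw [← norm_neg]; congr 1; ring
    have h3 : ‖z‖⁻¹ - v * ‖z‖ ≤ ‖z⁻¹ + (v:ℂ) * z‖ := by
      have := norm_sub_norm_le (z⁻¹ : ℂ) (-((v:ℂ) * z))
      have e1 : ‖(z⁻¹ : ℂ)‖ = ‖z‖⁻¹ := norm_inv z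
      have e2 : ‖-((v:ℂ) * z)‖ = v * ‖z‖ := by
        rw [norm_neg, norm_mul, Complex.norm_real, Real.norm_eq_abs, abs_of_pos hv]
      have e3 : z⁻¹ - -((v:ℂ) * z) = z⁻¹ + (v:ℂ) * z := by ring
      rw [e1, e2, e3] at this
      linarith
    linarith
  have hKge : ∀ z ∈ Ω, ρ⁻¹ - v * ρ - D * ρ ^ 2 ≤ ‖K z‖ := by
    intro z hz
    obtain ⟨hz0, hzp, hzρ⟩ := hmem z hz
    have h1 := hKlow z hz
    have h2 : ρ⁻¹ ≤ ‖z‖⁻¹ := inv_anti₀ hzp hzρ.le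
    have h3 : v * ‖z‖ ≤ v * ρ := by nlinarith
    have hsq : ‖z‖ ^ 2 ≤ ρ ^ 2 := by nlinarith
    have h4 : D * ‖z‖ ^ 2 ≤ D * ρ ^ 2 := mul_le_mul_of_nonneg_left hsq hD.le
    linarith
  have hKne : ∀ z ∈ Ω, K z ≠ 0 := by
    intro z hz h0
    have := hKge z hz
    rw [h0, norm_zero] at this
    linarith
  -- the function f = 1 / K on Ω, bounded
  set f : ℂ → ℂ := fun z => (K z)⁻¹ with hfdef
  have hfd : DifferentiableOn ℂ f Ω := by
    apply DifferentiableOn.inv hKd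
    exact hKne
  have hballdiff : (ball (0:ℂ) ρ) \ {0} = Ω := rfl
  have hbdd : BddAbove (norm ∘ f '' (ball (0:ℂ) ρ \ {0})) := by
    refine ⟨(ρ⁻¹ - v * ρ - D * ρ ^ 2)⁻¹, ?_⟩
    rintro y ⟨z, hz, rfl⟩
    simp only [comp_apply, hfdef, norm_inv]
    exact inv_anti₀ hF4 (hKge z hz)
  -- f tends to 0 at 0
  have hΩnhds : Ω ∈ 𝓝[≠] (0:ℂ) := by
    have := diff_mem_nhdsWithin_compl (ball_mem_nhds (0:ℂ) hρ) {0}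
    exact this
  have hflim : Tendsto f (𝓝[≠] (0:ℂ)) (𝓝 0) := by
    set C := v * ρ + D * ρ ^ 2 with hCdef
    have hC : 0 < C := by positivity
    set ρ₂ := min ρ (2 * C)⁻¹ with hρ₂def
    have hρ₂pos : 0 < ρ₂ := lt_min hρ (by positivity)
    apply squeeze_zero_norm' (a := fun z : ℂ => 2 * ‖z‖)
    · have hball : (ball (0:ℂ) ρ₂ \ {0}) ∈ 𝓝[≠] (0:ℂ) :=
        diff_mem_nhdsWithin_compl (ball_mem_nhds (0:ℂ) hρ₂pos) {0}
      filter_upwards [hball] with z hz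
      have hzΩ : z ∈ Ω := by
        refine ⟨ball_subset_ball (min_le_left _ _) hz.1, hz.2⟩
      obtain ⟨hz0, hzp, hzρ⟩ := hmem z hzΩ
      have hzρ₂ : ‖z‖ < ρ₂ := mem_ball_zero_iff.mp hz.1
      have h1 := hKlow z hzΩ
      have h2 : v * ‖z‖ + D * ‖z‖ ^ 2 ≤ C := by
        rw [hCdef]
        have ha : v * ‖z‖ ≤ v * ρ := by nlinarith
        have hsq : ‖z‖ ^ 2 ≤ ρ ^ 2 := by nlinarith
        have hb : D * ‖z‖ ^ 2 ≤ D * ρ ^ 2 := mul_le_mul_of_nonneg_left hsq hD.le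
        linarith
      have h3 : C ≤ (2 * ‖z‖)⁻¹ := by
        have hz2C : ‖z‖ ≤ (2 * C)⁻¹ := le_trans hzρ₂.le (min_le_right _ _)
        rw [← inv_inv C]
        apply inv_anti₀ (by positivity)
        calc 2 * ‖z‖ ≤ 2 * (2 * C)⁻¹ := by linarith
          _ ≤ C⁻¹ := by rw [mul_inv]; rw [inv_eq_one_div]; ring_nf; rfl
      have h4 : (2 * ‖z‖)⁻¹ ≤ ‖K z‖ := by
        have : ‖z‖⁻¹ - C ≤ ‖K z‖ := by linarith
        have h5 : (2 * ‖z‖)⁻¹ ≤ ‖z‖⁻¹ - C := by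
          have : (2 * ‖z‖)⁻¹ = ‖z‖⁻¹ - (2 * ‖z‖)⁻¹ := by
            rw [mul_inv]; field_simp; ring
          rw [this]
          have : C ≤ (2 * ‖z‖)⁻¹ := h3
          linarith
        linarith
      show ‖f z‖ ≤ 2 * ‖z‖
      simp only [hfdef, norm_inv]
      rw [← inv_inv (2 * ‖z‖)]
      exact inv_anti₀ (by positivity) h4
    · have : Tendsto (fun z : ℂ => 2 * ‖z‖) (𝓝 0) (𝓝 (2 * ‖(0:ℂ)‖)) :=
        (continuous_const.mul continuous_norm).tendsto 0
      rw [norm_zero, mul_zero] at this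
      exact tendsto_nhdsWithin_of_tendsto_nhds this
  -- the extension F
  have hlimeq : limUnder (𝓝[≠] (0:ℂ)) f = 0 := hflim.limUnder_eq
  have hFd : DifferentiableOn ℂ (update f 0 (limUnder (𝓝[≠] (0:ℂ)) f)) (ball (0:ℂ) ρ) :=
    Complex.differentiableOn_update_limUnder_of_bddAbove (ball_mem_nhds (0:ℂ) hρ) hfd hbdd
  rw [hlimeq] at hFd
  set F : ℂ → ℂ := update f 0 0 with hFdef
  have hF0 : F 0 = 0 := update_self 0 0 f
  have hFz : ∀ z : ℂ, z ≠ 0 → F z = (K z)⁻¹ := by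
    intro z hz
    simp only [hFdef, update_of_ne hz, hfdef]
  -- derivative of F at 0 is 1
  have hFat : DifferentiableAt ℂ F 0 :=
    (hFd.differentiableAt (ball_mem_nhds (0:ℂ) hρ))
  have hslope1 : Tendsto (slope F 0) (𝓝[≠] (0:ℂ)) (𝓝 (deriv F 0)) :=
    hasDerivAt_iff_tendsto_slope.mp hFat.hasDerivAt
  have hzK : Tendsto (fun z : ℂ => z * K z) (𝓝[≠] (0:ℂ)) (𝓝 1) := by
    have key : Tendsto (fun z : ℂ => z * K z - 1) (𝓝[≠] (0:ℂ)) (𝓝 0) := by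
      apply squeeze_zero_norm' (a := fun z : ℂ => (D * ρ + v) * ‖z‖ ^ 2)
      · filter_upwards [hΩnhds] with z hz
        obtain ⟨hz0, hzp, hzρ⟩ := hmem z hz
        have h1 := hK1 z hz
        have h2 : z * K z - 1 = z * (K z - z⁻¹ - (v:ℂ) * z) + (v:ℂ) * z ^ 2 := by
          field_simp
          ring
        rw [h2]
        calc ‖z * (K z - z⁻¹ - (v:ℂ) * z) + (v:ℂ) * z ^ 2‖
            ≤ ‖z * (K z - z⁻¹ - (v:ℂ) * z)‖ + ‖(v:ℂ) * z ^ 2‖ := norm_add_le _ _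
          _ = ‖z‖ * ‖K z - z⁻¹ - (v:ℂ) * z‖ + v * ‖z‖ ^ 2 := by
              rw [norm_mul, norm_mul, norm_pow, Complex.norm_real, Real.norm_eq_abs,
                abs_of_pos hv]
          _ ≤ ‖z‖ * (D * ‖z‖ ^ 2) + v * ‖z‖ ^ 2 := by
              have := mul_le_mul_of_nonneg_left h1 (norm_nonneg z)
              linarith
          _ ≤ (D * ρ + v) * ‖z‖ ^ 2 := by
              have h6 : ‖z‖ * (D * ‖z‖ ^ 2) ≤ ρ * (D * ‖z‖ ^ 2) :=
                mul_le_mul_of_nonneg_right hzρ.le (by positivity)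
              have h7 : (D * ρ + v) * ‖z‖ ^ 2 = ρ * (D * ‖z‖ ^ 2) + v * ‖z‖ ^ 2 := by ring
              linarith
      · have : Tendsto (fun z : ℂ => (D * ρ + v) * ‖z‖ ^ 2) (𝓝 0)
            (𝓝 ((D * ρ + v) * ‖(0:ℂ)‖ ^ 2)) :=
          (continuous_const.mul (continuous_norm.pow 2)).tendsto 0
        rw [norm_zero] at this
        norm_num at this
        exact tendsto_nhdsWithin_of_tendsto_nhds this
    have := key.add (tendsto_const_nhds (α := ℂ) (x := 1))
    simp only [zero_add, sub_add_cancel] at this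
    exact this
  have hslope2 : Tendsto (slope F 0) (𝓝[≠] (0:ℂ)) (𝓝 1) := by
    have hev : (fun z : ℂ => (z * K z)⁻¹) =ᶠ[𝓝[≠] (0:ℂ)] slope F 0 := by
      filter_upwards [hΩnhds, self_mem_nhdsWithin] with z hzΩ hz0
      simp only [mem_compl_iff, mem_singleton_iff] at hz0
      rw [slope_def_field, hF0, hFz z hz0, sub_zero, sub_zero, mul_inv, div_eq_mul_inv,
        mul_comm]
    have h1 : Tendsto (fun z : ℂ => (z * K z)⁻¹) (𝓝[≠] (0:ℂ)) (𝓝 1) := by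
      have := hzK.inv₀ one_ne_zero
      rw [inv_one] at this
      exact this
    exact h1.congr' hev
  have hderiv1 : deriv F 0 = 1 := tendsto_nhds_unique hslope1 hslope2
  -- strict derivative and local inverse
  have hFstrict : HasStrictDerivAt F 1 0 := by
    have hana : AnalyticOnNhd ℂ F (ball (0:ℂ) ρ) := hFd.analyticOnNhd isOpen_ball
    have hcd : ContDiffAt ℂ 1 F 0 :=
      (hana 0 (mem_ball_self hρ)).contDiffAt
    have := hcd.hasStrictDerivAt one_ne_zero
    rwa [hderiv1] at this
  have hFD := hFstrict.hasStrictFDerivAt_equiv one_ne_zero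
  set g := hFD.localInverse F _ 0 with hgdef
  have hg1 : ∀ᶠ u in 𝓝 (0:ℂ), F (g u) = u := by
    have := hFD.eventually_right_inverse
    rwa [hF0] at this
  have hg2 : ∀ᶠ u in 𝓝 (0:ℂ), g u ∈ ball (0:ℂ) ρ := by
    have hc : ContinuousAt g (0:ℂ) := by
      have := hFD.localInverse_continuousAt
      rwa [hF0] at this
    apply hc.eventually_mem
    have hg0 : g 0 = 0 := by
      have := hFD.localInverse_apply_image
      rw [hF0] at this
      exact this
    rw [hg0]
    exact ball_mem_nhds _ hρ
  obtain ⟨ε, hε, hεball⟩ := Metric.eventually_nhds_iff.mp (hg1.and hg2)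
  refine ⟨ε⁻¹, by positivity, ?_⟩
  intro w hw
  have hw0 : w ≠ 0 := by
    intro h; rw [h, norm_zero] at hw
    exact absurd hw (by positivity : (0:ℝ) ≤ ε⁻¹).not_gt
  set u := w⁻¹ with hudef
  have hu0 : u ≠ 0 := inv_ne_zero hw0
  have huε : dist u 0 < ε := by
    have h := inv_strictAnti₀ (by positivity : (0:ℝ) < ε⁻¹) hw
    rw [inv_inv] at h
    rw [dist_zero_right, hudef, norm_inv]
    exact h
  obtain ⟨hgu1, hgu2⟩ := hεball huε
  have hgu0 : g u ≠ 0 := by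
    intro h
    rw [h, hF0] at hgu1
    exact hu0 hgu1.symm
  have hguΩ : g u ∈ Ω := ⟨hgu2, hgu0⟩
  refine ⟨g u, hguΩ, ?_⟩
  have : (K (g u))⁻¹ = u := by rw [← hFz (g u) hgu0]; exact hgu1
  rw [← inv_inv (K (g u)), this, hudef, inv_inv]

/-- Under the stated hypotheses on `K`, there is a holomorphic right inverse `G` of `K`
defined on an open set `S` containing both the real tails `{x : |x| > 2√v + 5D/v}` and a
neighborhood `{z : |z| > R₀}` of infinity, with values in the punctured disc `A`. -/
theorem stmt_15 (m v D : ℝ) (hm : 0 < m) (hv : 0 < v) (hD : 0 < D)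
    (hmv : 4 / Real.sqrt v < m) (hDv : D / (v * Real.sqrt v) ≤ 1 / 8)
    (r : ℝ) (hr : r = 4 * D / v ^ 2)
    (A : Set ℂ) (hA : A = ball (0 : ℂ) m \ {0})
    (K : ℂ → ℂ) (hK : DifferentiableOn ℂ K A)
    (hreal : ∀ x : ℝ, 0 < |x| → |x| < m → (K (x : ℂ)).im = 0)
    (hK1 : ∀ z ∈ A, ‖K z - z⁻¹ - (v : ℂ) * z‖ ≤ D * (‖z‖) ^ 2)
    (hK2 : ∀ z ∈ A, ‖deriv K z + (z ^ 2)⁻¹ - (v : ℂ)‖ ≤ 2 * D * ‖z‖) :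
    ∃ R₀ : ℝ, 0 < R₀ ∧ ∃ S : Set ℂ, IsOpen S ∧
      ((fun x : ℝ => (x : ℂ)) '' {x : ℝ | 2 * Real.sqrt v + 5 * D / v < |x|} ⊆ S) ∧
      ({z : ℂ | R₀ < ‖z‖} ⊆ S) ∧
      ∃ G : ℂ → ℂ, DifferentiableOn ℂ G S ∧ ∀ w ∈ S, G w ∈ A ∧ K (G w) = w := by
  -- norm versions of the hypotheses on all of A
  have hK1' : ∀ z ∈ ball (0:ℂ) m \ {0}, ‖K z - z⁻¹ - (v:ℂ) * z‖ ≤ D * ‖z‖ ^ 2 := by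
    intro z hz
    exact hK1 z (hA ▸ hz)
  have hK2' : ∀ z ∈ ball (0:ℂ) m \ {0}, ‖deriv K z + (z ^ 2)⁻¹ - (v:ℂ)‖ ≤ 2 * D * ‖z‖ := by
    intro z hz
    exact hK2 z (hA ▸ hz)
  obtain ⟨ρ, hρ0, hρm, hF3, hF4, hF5⟩ := stmt15_num hv hD hm hmv hDv
  set Ω : Set ℂ := ball (0:ℂ) ρ \ {0} with hΩdef
  have hΩA : Ω ⊆ ball (0:ℂ) m \ {0} := by
    intro z hz
    exact ⟨ball_subset_ball hρm.le hz.1, hz.2⟩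
  have hΩA' : Ω ⊆ A := by rw [hA]; exact hΩA
  have hAopen : IsOpen A := by
    rw [hA]; exact isOpen_ball.sdiff isClosed_singleton
  have hΩopen : IsOpen Ω := isOpen_ball.sdiff isClosed_singleton
  have hKd : ∀ z ∈ Ω, DifferentiableAt ℂ K z := fun z hz =>
    hK.differentiableAt (hAopen.mem_nhds (hΩA' hz))
  have hK1Ω : ∀ z ∈ Ω, ‖K z - z⁻¹ - (v:ℂ) * z‖ ≤ D * ‖z‖ ^ 2 :=
    fun z hz => hK1' z (hΩA hz)
  have hK2Ω : ∀ z ∈ Ω, ‖deriv K z + (z ^ 2)⁻¹ - (v:ℂ)‖ ≤ 2 * D * ‖z‖ :=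
    fun z hz => hK2' z (hΩA hz)
  have hmem : ∀ z ∈ Ω, z ≠ 0 ∧ 0 < ‖z‖ ∧ ‖z‖ < ρ := by
    rintro z ⟨h1, h2⟩
    have hz0 : z ≠ 0 := h2
    exact ⟨hz0, norm_pos_iff.mpr hz0, mem_ball_zero_iff.mp h1⟩
  -- injectivity
  have hinj : Set.InjOn K Ω := stmt15_inj hv hD hρ0 hF3 hKd hK1Ω hK2Ω
  -- nonvanishing derivative
  have hK'ne : ∀ z ∈ Ω, deriv K z ≠ 0 := by
    intro z hz h0
    obtain ⟨hz0, hzp, hzρ⟩ := hmem z hz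
    have h1 := hK2Ω z hz
    rw [h0, zero_add] at h1
    have h2 : ‖((z ^ 2)⁻¹ : ℂ)‖ - ‖(v:ℂ)‖ ≤ ‖((z ^ 2)⁻¹ : ℂ) - (v:ℂ)‖ := norm_sub_norm_le _ _
    have h3 : ‖(v:ℂ)‖ = v := by
      rw [Complex.norm_real, Real.norm_eq_abs, abs_of_pos hv]
    have h4 : ‖((z ^ 2)⁻¹ : ℂ)‖ = (‖z‖ ^ 2)⁻¹ := by
      rw [norm_inv, norm_pow]
    have h5 : (ρ ^ 2)⁻¹ ≤ (‖z‖ ^ 2)⁻¹ := by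
      apply inv_anti₀ (by positivity)
      nlinarith
    have h6 : 2 * D * ‖z‖ ≤ 2 * D * ρ := by nlinarith
    rw [h3, h4] at h2
    linarith
  -- strict differentiability
  have hKstrict : ∀ z ∈ Ω, HasStrictDerivAt K (deriv K z) z := by
    intro z hz
    have hana : AnalyticOnNhd ℂ K A := hK.analyticOnNhd hAopen
    exact ((hana z (hΩA' hz)).contDiffAt).hasStrictDerivAt (n := 1) one_ne_zero
  -- the inverse
  set S : Set ℂ := K '' Ω with hSdef
  set G : ℂ → ℂ := Function.invFunOn K Ω with hGdef
  have hGmem : ∀ w ∈ S, G w ∈ Ω ∧ K (G w) = w := by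
    rintro w ⟨z, hz, rfl⟩
    exact ⟨Function.invFunOn_mem ⟨z, hz, rfl⟩, Function.invFunOn_eq ⟨z, hz, rfl⟩⟩
  have hSopen : IsOpen S := by
    rw [isOpen_iff_mem_nhds]
    rintro w ⟨z, hz, rfl⟩
    have hmap : Filter.map K (𝓝 z) = 𝓝 (K z) :=
      (hKstrict z hz).map_nhds_eq (hK'ne z hz)
    rw [← hmap, Filter.mem_map]
    filter_upwards [hΩopen.mem_nhds hz] with u hu
    exact ⟨u, hu, rfl⟩
  have hGdiff : DifferentiableOn ℂ G S := by
    intro w hw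
    apply DifferentiableAt.differentiableWithinAt
    obtain ⟨z, hz, rfl⟩ := hw
    have hs := hKstrict z hz
    have hne := hK'ne z hz
    have hFD := hs.hasStrictFDerivAt_equiv hne
    set g := hFD.localInverse K _ z with hgdef
    have hgd : DifferentiableAt ℂ g (K z) := by
      have := hFD.to_localInverse
      exact this.differentiableAt
    have hev : G =ᶠ[𝓝 (K z)] g := by
      have e1 : ∀ᶠ u in 𝓝 (K z), K (g u) = u := hFD.eventually_right_inverse
      have e2 : ∀ᶠ u in 𝓝 (K z), g u ∈ Ω := by
        have hc : ContinuousAt g (K z) := hFD.localInverse_continuousAt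
        apply hc.eventually_mem
        have hg0 : g (K z) = z := hFD.localInverse_apply_image
        rw [hg0]
        exact hΩopen.mem_nhds hz
      have e3 : ∀ᶠ u in 𝓝 (K z), u ∈ S := hSopen.eventually_mem ⟨z, hz, rfl⟩
      filter_upwards [e1, e2, e3] with u h1 h2 h3
      obtain ⟨hG1, hG2⟩ := hGmem u h3
      exact hinj hG1 h2 (hG2.trans h1.symm)
    exact hgd.congr_of_eventuallyEq hev
  -- existence of preimages at infinity
  obtain ⟨R₀, hR₀, hRinf⟩ := stmt15_inf hv hD hρ0 hF4 (hK.mono hΩA') hK1Ω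
  refine ⟨R₀, hR₀, S, hSopen, ?_, ?_, G, hGdiff, ?_⟩
  · rintro w ⟨x, hx, rfl⟩
    obtain ⟨z, hz, hKz⟩ := stmt15_real hv hD hm hρ0 hρm hF5
      (hK.continuousOn.mono (by rw [hA] : ball (0:ℂ) m \ {0} ⊆ A)) hreal hK1' x hx
    exact ⟨z, hz, hKz⟩
  · intro w hw
    simp only [mem_setOf_eq] at hw
    obtain ⟨z, hz, hKz⟩ := hRinf w hw
    exact ⟨z, hz, hKz⟩
  · intro w hw
    obtain ⟨h1, h2⟩ := hGmem w hw
    exact ⟨hΩA' h1, h2⟩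
end
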